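/- arXiv:2504.08936 — 10 statements merged into one kernel-verified Lean document; each statement's English description precedes it below -/
import Mathlib

section
/- Let $G$ be a $(P_4 \cup P_1)$-free graph and $S$ a cutset of $G$. Let $x \in S$ and let $y$ be a neighbor of $x$ lying in $G-S$. Suppose $G-S$ has a vertex $z$ such that $z$ is not adjacent to $x$, $z$ is not adjacent to $y$, and some component of $G-S$ containing neither $y$ nor $z$ contains a neighbor of $x$. Then $x$ is adjacent to every vertex of every component of $G-S$ to which $x$ has at least one neighbor, with the possible exception of the component containing $z$. -/
open SimpleGraph

/-- The number of connected components of `G - S`. -/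
noncomputable def ncomps {V : Type*} (G : SimpleGraph V) (S : Set V) : ℕ :=
  Nat.card (G.induce Sᶜ).ConnectedComponent

/-- The graph `P₄ ∪ P₁`: a path on four vertices plus an isolated vertex. -/
def P4P1 : SimpleGraph (Fin 5) :=
  SimpleGraph.fromEdgeSet {s((0 : Fin 5), (1 : Fin 5)), s((1 : Fin 5), (2 : Fin 5)),
    s((2 : Fin 5), (3 : Fin 5))}

/-- `G` has no induced subgraph isomorphic to `P₄ ∪ P₁`. -/
def P4P1Free {V : Type*} (G : SimpleGraph V) : Prop := IsEmpty (P4P1 ↪g G)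

/-- `G` has no induced subgraph isomorphic to `P₄`. -/
def P4Free {V : Type*} (G : SimpleGraph V) : Prop := IsEmpty (SimpleGraph.pathGraph 4 ↪g G)

/-- `G` is `t`-tough. -/
def Tough {V : Type*} (t : ℝ) (G : SimpleGraph V) : Prop :=
  ∀ S : Set V, 2 ≤ ncomps G S → t * (ncomps G S : ℝ) ≤ (S.ncard : ℝ)

/-- `S` is a cutset of `G`, i.e. `G - S` is disconnected. -/
def IsCutset {V : Type*} (G : SimpleGraph V) (S : Set V) : Prop :=
  2 ≤ ncomps G S

/-- `S` is a scattering set of `G`. -/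
def IsScatSet {V : Type*} (G : SimpleGraph V) (S : Set V) : Prop :=
  2 ≤ ncomps G S ∧ ∀ T : Set V, 2 ≤ ncomps G T →
    (ncomps G T : ℤ) - (T.ncard : ℤ) ≤ (ncomps G S : ℤ) - (S.ncard : ℤ)

/-- `S` is a maximal scattering set of `G`. -/
def IsMaxScatSet {V : Type*} (G : SimpleGraph V) (S : Set V) : Prop :=
  IsScatSet G S ∧ ∀ T : Set V, IsScatSet G T → S ⊆ T → S = T

/-- `G` is `t`-tough with respect to `S`. -/
def ToughWrt {V : Type*} (t : ℝ) (G : SimpleGraph V) (S : Set V) : Prop :=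
  ∀ W : Set V, 2 ≤ ncomps G W →
    (∀ c : (G.induce Sᶜ).ConnectedComponent,
      ∃ v : ↥Sᶜ, (G.induce Sᶜ).connectedComponentMk v = c ∧ (v : V) ∉ W) →
    t * (ncomps G W : ℝ) ≤ (W.ncard : ℝ)
private lemma findPair {V : Type*} (G : SimpleGraph V) (S : Set V) (x : V) :
    ∀ {a c : ↥Sᶜ} (_ : (G.induce Sᶜ).Walk a c), G.Adj x (a : V) → ¬ G.Adj x (c : V) →
    ∃ a' b' : ↥Sᶜ, (G.induce Sᶜ).Adj a' b' ∧ G.Adj x (a' : V) ∧ ¬ G.Adj x (b' : V) ∧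
      (G.induce Sᶜ).Reachable a a' := by
  intro a c W
  induction W with
  | nil => exact fun h hn => absurd h hn
  | @cons u v w h W ih =>
    intro ha hc
    by_cases hb : G.Adj x (v : V)
    · obtain ⟨a', b', h1, h2, h3, h4⟩ := ih hb hc
      exact ⟨a', b', h1, h2, h3, h.reachable.trans h4⟩
    · exact ⟨u, v, h, ha, hb, Reachable.refl u⟩

theorem stmt1 {V : Type*} [Fintype V] (G : SimpleGraph V) (hfree : P4P1Free G)
    (S : Set V) (hS : IsCutset G S)
    (x : V) (hx : x ∈ S) (y z : ↥Sᶜ)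
    (hxy : G.Adj x (y : V)) (hxz : ¬ G.Adj x (z : V)) (hyz : ¬ G.Adj (y : V) (z : V))
    (hD : ∃ u : ↥Sᶜ,
      (G.induce Sᶜ).connectedComponentMk u ≠ (G.induce Sᶜ).connectedComponentMk y ∧
      (G.induce Sᶜ).connectedComponentMk u ≠ (G.induce Sᶜ).connectedComponentMk z ∧
      G.Adj x (u : V)) :
    ∀ w : ↥Sᶜ,
      (G.induce Sᶜ).connectedComponentMk w ≠ (G.induce Sᶜ).connectedComponentMk z →
      (∃ u : ↥Sᶜ, (G.induce Sᶜ).connectedComponentMk u = (G.induce Sᶜ).connectedComponentMk w ∧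
        G.Adj x (u : V)) →
      G.Adj x (w : V) := by
  intro w hwz ⟨u', hu'c, hxu'⟩
  by_contra hnxw
  have comp_eq : ∀ a b : ↥Sᶜ, G.Adj (a : V) (b : V) →
      (G.induce Sᶜ).connectedComponentMk a = (G.induce Sᶜ).connectedComponentMk b := by
    intro a b hab
    exact ConnectedComponent.sound (SimpleGraph.Adj.reachable (by exact hab))
  obtain ⟨W⟩ : (G.induce Sᶜ).Reachable u' w := ConnectedComponent.exact hu'c
  obtain ⟨a, b, hab, hxa, hnxb, hra⟩ := findPair G S x W hxu' hnxw
  have hca : (G.induce Sᶜ).connectedComponentMk a = (G.induce Sᶜ).connectedComponentMk w := by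
    rw [← hu'c]; exact (ConnectedComponent.sound hra).symm
  have hcb : (G.induce Sᶜ).connectedComponentMk b = (G.induce Sᶜ).connectedComponentMk w := by
    rw [← hca]; exact (ConnectedComponent.sound hab.reachable).symm
  obtain ⟨u, huy, huz, hxu⟩ := hD
  obtain ⟨p, hxp, hnpz, hpw⟩ : ∃ p : ↥Sᶜ, G.Adj x (p : V) ∧ ¬ G.Adj (p : V) (z : V) ∧
      (G.induce Sᶜ).connectedComponentMk p ≠ (G.induce Sᶜ).connectedComponentMk w := by
    by_cases hcase : (G.induce Sᶜ).connectedComponentMk u = (G.induce Sᶜ).connectedComponentMk w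
    · exact ⟨y, hxy, hyz, fun h => huy (by rw [hcase, ← h])⟩
    · exact ⟨u, hxu, fun h => huz (comp_eq u z h), hcase⟩
  have hab' : G.Adj (a : V) (b : V) := hab
  -- non-adjacencies (both directions)
  have hnpa : ¬ G.Adj (p : V) (a : V) := fun h => hpw ((comp_eq p a h).trans hca)
  have hnap : ¬ G.Adj (a : V) (p : V) := fun h => hnpa h.symm
  have hnpb : ¬ G.Adj (p : V) (b : V) := fun h => hpw ((comp_eq p b h).trans hcb)
  have hnbp : ¬ G.Adj (b : V) (p : V) := fun h => hnpb h.symm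
  have hnzp : ¬ G.Adj (z : V) (p : V) := fun h => hnpz h.symm
  have hnza : ¬ G.Adj (z : V) (a : V) := fun h => hwz (hca ▸ (comp_eq z a h).symm)
  have hnaz : ¬ G.Adj (a : V) (z : V) := fun h => hnza h.symm
  have hnzb : ¬ G.Adj (z : V) (b : V) := fun h => hwz (hcb ▸ (comp_eq z b h).symm)
  have hnbz : ¬ G.Adj (b : V) (z : V) := fun h => hnzb h.symm
  have hnbx : ¬ G.Adj (b : V) x := fun h => hnxb h.symm
  have hnzx : ¬ G.Adj (z : V) x := fun h => hxz h.symm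
  -- distinctness (both directions)
  have hxS : ∀ q : ↥Sᶜ, x ≠ (q : V) := fun q h => q.2 (h ▸ hx)
  have n10 : x ≠ (p : V) := hxS p
  have n01 : (p : V) ≠ x := n10.symm
  have n12 : x ≠ (a : V) := hxS a
  have n21 : (a : V) ≠ x := n12.symm
  have n13 : x ≠ (b : V) := hxS b
  have n31 : (b : V) ≠ x := n13.symm
  have n14 : x ≠ (z : V) := hxS z
  have n41 : (z : V) ≠ x := n14.symm
  have n02 : (p : V) ≠ (a : V) := fun h => hpw (by rw [Subtype.coe_injective h, hca])
  have n20 : (a : V) ≠ (p : V) := n02.symm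
  have n03 : (p : V) ≠ (b : V) := fun h => hpw (by rw [Subtype.coe_injective h, hcb])
  have n30 : (b : V) ≠ (p : V) := n03.symm
  have n04 : (p : V) ≠ (z : V) := fun h => hxz (h ▸ hxp)
  have n40 : (z : V) ≠ (p : V) := n04.symm
  have n23 : (a : V) ≠ (b : V) := hab'.ne
  have n32 : (b : V) ≠ (a : V) := n23.symm
  have n24 : (a : V) ≠ (z : V) := fun h => hwz (by rw [← hca, Subtype.coe_injective h])
  have n42 : (z : V) ≠ (a : V) := n24.symm
  have n34 : (b : V) ≠ (z : V) := fun h => hwz (by rw [← hcb, Subtype.coe_injective h])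
  have n43 : (z : V) ≠ (b : V) := n34.symm
  let f : Fin 5 → V := ![(p : V), x, (a : V), (b : V), (z : V)]
  have hinj : Function.Injective f := by
    intro i j hij
    fin_cases i <;> fin_cases j <;> simp only [f, Matrix.cons_val_zero, Matrix.cons_val_one,
      Matrix.head_cons, Matrix.cons_val_succ, Matrix.cons_val_fin_one] at hij <;>
      first
        | rfl
        | exact absurd hij n01 | exact absurd hij n02 | exact absurd hij n03
        | exact absurd hij n04 | exact absurd hij n10 | exact absurd hij n12
        | exact absurd hij n13 | exact absurd hij n14 | exact absurd hij n20
        | exact absurd hij n21 | exact absurd hij n23 | exact absurd hij n24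
        | exact absurd hij n30 | exact absurd hij n31 | exact absurd hij n32
        | exact absurd hij n34 | exact absurd hij n40 | exact absurd hij n41
        | exact absurd hij n42 | exact absurd hij n43
  have hrel : ∀ i j : Fin 5, G.Adj (f i) (f j) ↔ P4P1.Adj i j := by
    intro i j
    fin_cases i <;> fin_cases j <;> simp [f, P4P1] <;>
      first
        | exact G.irrefl
        | exact hxp | exact hxp.symm | exact hxa | exact hxa.symm
        | exact hab' | exact hab'.symm
        | exact hnpa | exact hnap | exact hnpb | exact hnbp
        | exact hnpz | exact hnzp | exact hnza | exact hnaz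
        | exact hnzb | exact hnbz | exact hnxb | exact hnbx
        | exact hxz | exact hnzx
  exact hfree.elim ⟨⟨f, hinj⟩, fun {i j} => hrel i j⟩
end

section
/- Let $G$ be a $P_4$-free graph and $S$ a cutset of $G$ such that each vertex of $S$ has, in $G$, neighbors in at least two distinct components of $G-S$. Then for every $x \in S$ and every component $D$ of $G-S$, if $x$ has a neighbor in $D$ then $x$ is adjacent to every vertex of $D$. -/
open SimpleGraph

private theorem keyStep {V : Type*} (G : SimpleGraph V) (hfree : P4Free G) (S : Set V)
    (x : V) (hx : x ∈ S) (v a b : ↥Sᶜ)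
    (hxv : G.Adj x v) (hxa : G.Adj x a) (hab : (G.induce Sᶜ).Adj a b)
    (hcomp : (G.induce Sᶜ).connectedComponentMk v ≠ (G.induce Sᶜ).connectedComponentMk a) :
    G.Adj x (b : V) := by
  by_contra hxb
  have habG : G.Adj (a : V) (b : V) := hab
  have hva : ¬ G.Adj (v : V) (a : V) := fun h => hcomp (ConnectedComponent.sound (Adj.reachable h))
  have hcompb : (G.induce Sᶜ).connectedComponentMk a = (G.induce Sᶜ).connectedComponentMk b :=
    ConnectedComponent.sound hab.reachable
  have hvb : ¬ G.Adj (v : V) (b : V) := fun h =>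
    hcomp (by rw [hcompb]; exact ConnectedComponent.sound (Adj.reachable h))
  have hvx : (v : V) ≠ x := fun h => v.2 (h ▸ hx)
  have hax : (a : V) ≠ x := fun h => a.2 (h ▸ hx)
  have hbx : (b : V) ≠ x := fun h => b.2 (h ▸ hx)
  have hvane : (v:V) ≠ (a:V) := fun h => hcomp (by rw [Subtype.ext h])
  have hvbne : (v:V) ≠ (b:V) := fun h => hcomp (by rw [Subtype.ext h, hcompb])
  have habne : (a:V) ≠ (b:V) := habG.ne
  -- embedding v, x, a, b
  let f : Fin 4 → V := ![(v:V), x, (a:V), (b:V)]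
  have hinj : Function.Injective f := by
    intro i j hij
    fin_cases i <;> fin_cases j <;>
      simp_all [f, hvx.symm, hax.symm, hbx.symm, hvane.symm, hvbne.symm, habne.symm] <;> rfl
  have hav : ¬ G.Adj (a : V) (v : V) := fun h => hva h.symm
  have hbv : ¬ G.Adj (b : V) (v : V) := fun h => hvb h.symm
  have hbxadj : ¬ G.Adj (b : V) x := fun h => hxb h.symm
  have h3 : ((3 : Fin 4) : ℕ) = 3 := rfl
  have hmap : ∀ i j, G.Adj (f i) (f j) ↔ (pathGraph 4).Adj i j := by
    intro i j
    fin_cases i <;> fin_cases j <;>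
      simp [f, pathGraph, hxv, hxa, habG, hxv.symm, hxa.symm, habG.symm, hva, hvb, hxb,
        hav, hbv, hbxadj, h3,
        G.irrefl, ← Fin.coe_covBy_iff, Order.covBy_iff_add_one_eq]
  exact hfree.elim ⟨⟨f, hinj⟩, hmap _ _⟩

theorem stmt2 {V : Type*} [Fintype V] (G : SimpleGraph V) (hfree : P4Free G)
    (S : Set V) (hS : IsCutset G S)
    (htwo : ∀ x ∈ S, ∃ u v : ↥Sᶜ, G.Adj x (u : V) ∧ G.Adj x (v : V) ∧
      (G.induce Sᶜ).connectedComponentMk u ≠ (G.induce Sᶜ).connectedComponentMk v) :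
    ∀ x ∈ S, ∀ w u : ↥Sᶜ,
      (G.induce Sᶜ).connectedComponentMk u = (G.induce Sᶜ).connectedComponentMk w →
      G.Adj x (u : V) → G.Adj x (w : V) := by
  intro x hx w u hcomp hxu
  obtain ⟨p⟩ : (G.induce Sᶜ).Reachable u w := ConnectedComponent.exact hcomp
  clear hcomp
  induction p with
  | nil => exact hxu
  | @cons a c _ hac _ ih =>
    apply ih
    obtain ⟨u', v', hu', hv', hne⟩ := htwo x hx
    by_cases h : (G.induce Sᶜ).connectedComponentMk u' = (G.induce Sᶜ).connectedComponentMk a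
    · exact keyStep G hfree S x hx v' a c hv' hxu hac (fun hh => hne (hh ▸ h))
    · exact keyStep G hfree S x hx u' a c hu' hxu hac h
end

section
/- Let $G$ be a $P_4$-free graph and $S$ a cutset of $G$ such that each vertex of $S$ has, in $G$, neighbors in at least two distinct components of $G-S$. If $S^* \subseteq S$ is a minimal cutset of $G$, then every vertex of $S^*$ is adjacent to every vertex of $G-S^*$. -/
open SimpleGraph

lemma walk_closed {V : Type*} (G : SimpleGraph V) (s : Set V) (P : ↥s → Prop)
    (hP : ∀ a b : ↥s, P a → (G.induce s).Adj a b → P b) :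
    ∀ {a b : ↥s}, (G.induce s).Reachable a b → P a → P b := by
  intro a b ⟨p⟩
  induction p with
  | nil => exact id
  | cons h q ih => intro ha; exact ih (hP _ _ ha h)

lemma firstNbr {V : Type*} (G : SimpleGraph V) (s : Set V) (x : V) :
    ∀ {a b : ↥s}, (G.induce s).Walk a b → ¬G.Adj x (a : V) → G.Adj x (b : V) →
    ∃ w1 w2 : ↥s, (G.induce s).Adj w1 w2 ∧ ¬G.Adj x (w1 : V) ∧ G.Adj x (w2 : V) ∧
      (G.induce s).Reachable a w1 := by
  intro a b p
  induction p with
  | nil => intro h1 h2; exact absurd h2 h1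
  | @cons u m w h q ih =>
    intro h1 h2
    by_cases hm : G.Adj x (m : V)
    · exact ⟨u, m, h, h1, hm, Reachable.refl _⟩
    · obtain ⟨w1, w2, h12, hn, hy, hr⟩ := ih hm h2
      exact ⟨w1, w2, h12, hn, hy, (h.reachable).trans hr⟩


theorem stmt3 {V : Type*} [Fintype V] (G : SimpleGraph V) (hfree : P4Free G)
    (S : Set V) (hS : IsCutset G S)
    (htwo : ∀ x ∈ S, ∃ u v : ↥Sᶜ, G.Adj x (u : V) ∧ G.Adj x (v : V) ∧
      (G.induce Sᶜ).connectedComponentMk u ≠ (G.induce Sᶜ).connectedComponentMk v)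
    (S' : Set V) (hsub : S' ⊆ S)
    (hcut : IsCutset G S') (hmin : ∀ T : Set V, T ⊂ S' → ¬ IsCutset G T) :
    ∀ x ∈ S', ∀ v ∉ S', G.Adj x v := by
  classical
  intro x hx v hv
  by_contra hxv
  -- Step A: x has a neighbor in every component of G - S'
  have nbrAll : ∀ c : (G.induce S'ᶜ).ConnectedComponent,
      ∃ u : ↥S'ᶜ, G.Adj x (u : V) ∧ (G.induce S'ᶜ).connectedComponentMk u = c := by
    intro c
    by_contra hno
    push_neg at hno
    set T : Set V := S' \ {x} with hT
    apply hmin T (Set.sdiff_singleton_ssubset.mpr hx)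
    obtain ⟨v₁, hv₁⟩ := c.exists_rep
    have hv₁T : (v₁ : V) ∈ Tᶜ := fun h => v₁.2 h.1
    have hxT : x ∈ Tᶜ := fun h => h.2 rfl
    have key : ∀ {a b : ↥Tᶜ}, (G.induce Tᶜ).Reachable a b →
        (∃ h : (a : V) ∈ S'ᶜ, (G.induce S'ᶜ).connectedComponentMk ⟨a, h⟩ = c) →
        (∃ h : (b : V) ∈ S'ᶜ, (G.induce S'ᶜ).connectedComponentMk ⟨b, h⟩ = c) := by
      intro a b hr
      refine walk_closed G Tᶜ
        (fun w => ∃ h : (w : V) ∈ S'ᶜ, (G.induce S'ᶜ).connectedComponentMk ⟨w, h⟩ = c)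
        ?_ hr
      rintro a b ⟨ha, hac⟩ hadj
      have hGab : G.Adj (a : V) (b : V) := hadj
      by_cases hbx : (b : V) = x
      · exact absurd ((hbx ▸ hGab).symm) (fun hh => hno ⟨a, ha⟩ hh hac)
      · have hb : (b : V) ∈ S'ᶜ := fun hbS => b.2 ⟨hbS, hbx⟩
        refine ⟨hb, ?_⟩
        rw [← hac]
        exact (ConnectedComponent.connectedComponentMk_eq_of_adj
          (show (G.induce S'ᶜ).Adj ⟨a, ha⟩ ⟨b, hb⟩ from hGab)).symm
    have hne : (G.induce Tᶜ).connectedComponentMk ⟨(v₁ : V), hv₁T⟩ ≠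
        (G.induce Tᶜ).connectedComponentMk ⟨x, hxT⟩ := by
      intro h
      obtain ⟨hmem, -⟩ := key (ConnectedComponent.exact h) ⟨v₁.2, hv₁⟩
      exact hmem hx
    have : Nontrivial (G.induce Tᶜ).ConnectedComponent := nontrivial_of_ne _ _ hne
    exact Finite.one_lt_card_iff_nontrivial.mpr this
  -- Step B
  have hvS : v ∈ S'ᶜ := hv
  set cv := (G.induce S'ᶜ).connectedComponentMk ⟨v, hvS⟩ with hcv
  have hnt : Nontrivial (G.induce S'ᶜ).ConnectedComponent :=
    Finite.one_lt_card_iff_nontrivial.mp hcut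
  obtain ⟨c2, hc2⟩ := exists_ne cv
  obtain ⟨a, hxa, hac2⟩ := nbrAll c2
  obtain ⟨u, hxu, hucv⟩ := nbrAll cv
  have hreach : (G.induce S'ᶜ).Reachable ⟨v, hvS⟩ u :=
    (ConnectedComponent.exact hucv).symm
  obtain ⟨p⟩ := hreach
  obtain ⟨w1, w2, h12, n1x, h2x, hrw⟩ := firstNbr G S'ᶜ x p hxv hxu
  have hw1c : (G.induce S'ᶜ).connectedComponentMk w1 = cv :=
    (ConnectedComponent.sound hrw).symm
  have hw2c : (G.induce S'ᶜ).connectedComponentMk w2 = cv := by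
    rw [← hw1c]; exact (ConnectedComponent.connectedComponentMk_eq_of_adj h12).symm
  have hdiff : ∀ w : ↥S'ᶜ, (G.induce S'ᶜ).connectedComponentMk w = cv →
      ¬ G.Adj (w : V) (a : V) := by
    intro w hw hadj
    apply hc2
    rw [← hac2, ← hw]
    exact (ConnectedComponent.connectedComponentMk_eq_of_adj
      (show (G.induce S'ᶜ).Adj w a from hadj)).symm
  have A12 : G.Adj (w1 : V) (w2 : V) := h12
  have Ax2 : G.Adj x (w2 : V) := h2x
  have Axa : G.Adj x (a : V) := hxa
  have N1x : ¬ G.Adj (w1 : V) x := fun h => n1x h.symm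
  have N1a : ¬ G.Adj (w1 : V) (a : V) := hdiff w1 hw1c
  have N2a : ¬ G.Adj (w2 : V) (a : V) := hdiff w2 hw2c
  have Na1 : ¬ G.Adj (a : V) (w1 : V) := fun h => N1a h.symm
  have Na2 : ¬ G.Adj (a : V) (w2 : V) := fun h => N2a h.symm
  have ne1x : (w1 : V) ≠ x := fun h => w1.2 (h ▸ hx)
  have ne2x : (w2 : V) ≠ x := fun h => w2.2 (h ▸ hx)
  have neax : (a : V) ≠ x := fun h => a.2 (h ▸ hx)
  have ne12 : (w1 : V) ≠ (w2 : V) := A12.ne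
  have ne1a : (w1 : V) ≠ (a : V) := fun h => N2a ((h ▸ A12).symm)
  have ne2a : (w2 : V) ≠ (a : V) := fun h => N1a (h ▸ A12)
  refine hfree.elim ⟨⟨![(w1 : V), (w2 : V), x, (a : V)], ?_⟩, ?_⟩
  · intro i j hij
    fin_cases i <;> fin_cases j <;> simp at hij ⊢ <;>
      first
        | rfl
        | exact absurd hij ne12 | exact absurd hij ne1x | exact absurd hij ne1a
        | exact absurd hij ne12.symm | exact absurd hij ne2x | exact absurd hij ne2a
        | exact absurd hij ne1x.symm | exact absurd hij ne2x.symm | exact absurd hij neax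
        | exact absurd hij ne1a.symm | exact absurd hij ne2a.symm | exact absurd hij neax.symm
  · intro i j
    show G.Adj (![(w1 : V), (w2 : V), x, (a : V)] i) (![(w1 : V), (w2 : V), x, (a : V)] j) ↔ _
    fin_cases i <;> fin_cases j <;>
      simp [pathGraph_adj, Matrix.cons_val_zero, Matrix.cons_val_one, Matrix.head_cons,
        A12, Ax2, Axa, A12.symm, Ax2.symm, Axa.symm, n1x, N1x, N1a, N2a, Na1, Na2] <;>
      decide
end

section
/- Let $G$ be a non-complete graph with scattering number $s(G) \ge 0$ and let $S \subseteq V(G)$ be a maximal scattering set of $G$. Then for every nonempty proper subset $S_1$ of $S$, at least $|S_1|+1$ distinct components of $G-S$ contain a neighbor of some vertex of $S_1$. -/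
open SimpleGraph

lemma walk_closed_s5 {V : Type*} (G : SimpleGraph V) (S S1 : Set V)
    (c : (G.induce Sᶜ).ConnectedComponent)
    (hc : ¬ ∃ u : ↥Sᶜ, (G.induce Sᶜ).connectedComponentMk u = c ∧ ∃ x ∈ S1, G.Adj x (u : V)) :
    ∀ (u w : ↥(S \ S1)ᶜ), (G.induce (S \ S1)ᶜ).Walk u w →
      (∃ hu : (u : V) ∈ Sᶜ, (G.induce Sᶜ).connectedComponentMk ⟨u, hu⟩ = c) →
      ∃ hw : (w : V) ∈ Sᶜ, (G.induce Sᶜ).connectedComponentMk ⟨w, hw⟩ = c := by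
  intro u w p
  induction p with
  | nil => exact id
  | @cons a b w hab p ih =>
    rintro ⟨ha, hmk⟩
    apply ih
    have hadj : G.Adj (a : V) (b : V) := hab
    have hbS : (b : V) ∈ Sᶜ := by
      by_contra hb
      have hbS' : (b : V) ∈ S := not_not.mp hb
      have hb1 : (b : V) ∈ S1 := by
        have := b.2
        simp only [Set.mem_compl_iff, Set.mem_diff, not_and, not_not] at this
        exact this hbS'
      exact hc ⟨⟨a, ha⟩, hmk, (b : V), hb1, hadj.symm⟩
    refine ⟨hbS, ?_⟩
    have : (G.induce Sᶜ).Adj ⟨b, hbS⟩ ⟨a, ha⟩ := hadj.symm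
    exact (ConnectedComponent.sound this.reachable).trans hmk

theorem stmt5 {V : Type*} [Fintype V] (G : SimpleGraph V)
    (S : Set V) (hS : IsMaxScatSet G S) (h0 : S.ncard ≤ ncomps G S)
    (S1 : Set V) (hne : S1.Nonempty) (hss : S1 ⊂ S) :
    S1.ncard + 1 ≤
      {c : (G.induce Sᶜ).ConnectedComponent |
        ∃ u : ↥Sᶜ, (G.induce Sᶜ).connectedComponentMk u = c ∧
          ∃ x ∈ S1, G.Adj x (u : V)}.ncard := by
  classical
  set T : Set V := S \ S1 with hT
  set M : Set (G.induce Sᶜ).ConnectedComponent :=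
    {c | ∃ u : ↥Sᶜ, (G.induce Sᶜ).connectedComponentMk u = c ∧
      ∃ x ∈ S1, G.Adj x (u : V)} with hM
  have hsub : Sᶜ ⊆ Tᶜ := Set.compl_subset_compl.mpr Set.diff_subset
  have hFin : Finite (G.induce Sᶜ).ConnectedComponent := Quot.finite _
  have hFinT : Finite (G.induce Tᶜ).ConnectedComponent := Quot.finite _
  -- the hom
  let ι : (G.induce Sᶜ) →g (G.induce Tᶜ) :=
    ⟨Set.inclusion hsub, fun {a b} hab => hab⟩
  let φ := ConnectedComponent.map ι
  obtain ⟨s₀, hs₀⟩ := hne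
  have hs₀T : s₀ ∈ Tᶜ := by simp [hT, hs₀]
  -- injection from Mᶜ ⊕ Unit
  let f : (↥Mᶜ) ⊕ Unit → (G.induce Tᶜ).ConnectedComponent := fun x =>
    match x with
    | .inl c => φ c.1
    | .inr _ => (G.induce Tᶜ).connectedComponentMk ⟨s₀, hs₀T⟩
  have key : ∀ (c : (G.induce Sᶜ).ConnectedComponent), c ∈ Mᶜ →
      ∀ (v : ↥Sᶜ), (G.induce Sᶜ).connectedComponentMk v = c →
      ∀ (w : ↥Tᶜ), φ c = (G.induce Tᶜ).connectedComponentMk w →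
      ∃ hw : (w : V) ∈ Sᶜ, (G.induce Sᶜ).connectedComponentMk ⟨w, hw⟩ = c := by
    intro c hcM v hv w hw
    have h1 : φ c = (G.induce Tᶜ).connectedComponentMk (ι v) := by
      rw [← hv]; rfl
    have hreach : (G.induce Tᶜ).Reachable (ι v) w :=
      ConnectedComponent.exact (h1.symm.trans hw)
    obtain ⟨p⟩ := hreach
    exact walk_closed_s5 G S S1 c hcM (ι v) w p ⟨v.2, hv⟩
  have hinj : Function.Injective f := by
    rintro (⟨c₁, hc₁⟩ | _) (⟨c₂, hc₂⟩ | _) hf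
    · obtain ⟨v₂, hv₂'⟩ := c₂.exists_rep
      have hv₂ : (G.induce Sᶜ).connectedComponentMk v₂ = c₂ := hv₂'
      have h2 : φ c₂ = (G.induce Tᶜ).connectedComponentMk (ι v₂) := by
        rw [← hv₂]; rfl
      obtain ⟨v₁, hv₁'⟩ := c₁.exists_rep
      have hv₁ : (G.induce Sᶜ).connectedComponentMk v₁ = c₁ := hv₁'
      have hf' : φ c₁ = φ c₂ := hf
      obtain ⟨hw, hmk⟩ := key c₁ hc₁ v₁ hv₁ (ι v₂) (hf'.trans h2)
      have heq : (⟨(ι v₂ : V), hw⟩ : ↥Sᶜ) = v₂ := Subtype.ext rfl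
      rw [heq, hv₂] at hmk
      simp [hmk]
    · obtain ⟨v₁, hv₁'⟩ := c₁.exists_rep
      have hv₁ : (G.induce Sᶜ).connectedComponentMk v₁ = c₁ := hv₁'
      obtain ⟨hw, _⟩ := key c₁ hc₁ v₁ hv₁ ⟨s₀, hs₀T⟩ hf
      exact absurd (hss.1 hs₀) hw
    · obtain ⟨v₂, hv₂'⟩ := c₂.exists_rep
      have hv₂ : (G.induce Sᶜ).connectedComponentMk v₂ = c₂ := hv₂'
      obtain ⟨hw, _⟩ := key c₂ hc₂ v₂ hv₂ ⟨s₀, hs₀T⟩ hf.symm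
      exact absurd (hss.1 hs₀) hw
    · rfl
  have hcard : Mᶜ.ncard + 1 ≤ ncomps G T := by
    have := Nat.card_le_card_of_injective f hinj
    rw [Nat.card_sum, Nat.card_coe_set_eq, Nat.card_unique] at this
    simpa [ncomps] using this
  have hcompl : M.ncard + Mᶜ.ncard = ncomps G S :=
    Set.ncard_add_ncard_compl M
  have hT1 : T.ncard + S1.ncard = S.ncard := by
    rw [hT]; exact Set.ncard_diff_add_ncard_of_subset hss.subset
  by_cases h2T : 2 ≤ ncomps G T
  · have := hS.1.2 T h2T
    omega
  · have h1 : S1.ncard < S.ncard := Set.ncard_lt_ncard hss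
    omega
end

section
/- Let $G$ be a non-complete graph with scattering number $s(G) \ge 0$ and let $S \subseteq V(G)$ be a maximal scattering set of $G$. Then every component $D$ of $G-S$ is either a complete graph or satisfies $s(D) \le 0$. -/
open SimpleGraph

lemma reach_aux {V W : Type*} {G : SimpleGraph V} {H : SimpleGraph W} (e : H ↪g G) :
    ∀ {x y : V} (p : G.Walk x y), (∀ z ∈ p.support, z ∈ Set.range e) →
    ∀ a b : W, e a = x → e b = y → H.Reachable a b := by
  intro x y p
  induction p with
  | nil =>
    intro _ a b ha hb
    have : a = b := e.injective (ha.trans hb.symm)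
    subst this
    exact Reachable.refl a
  | @cons u v w h q ih =>
    intro hs a b ha hb
    obtain ⟨a', ha'⟩ := hs v (by simp)
    have hadj : H.Adj a a' := e.map_rel_iff.mp (by rw [ha, ha']; exact h)
    exact hadj.reachable.trans (ih (fun z hz => hs z (by simp [hz])) a' b ha' hb)

theorem stmt6 {V : Type*} [Fintype V] (G : SimpleGraph V)
    (S : Set V) (hS : IsMaxScatSet G S) (h0 : S.ncard ≤ ncomps G S)
    (c : (G.induce Sᶜ).ConnectedComponent) :
    (∀ a b : ↥c.supp, a ≠ b → ((G.induce Sᶜ).induce c.supp).Adj a b) ∨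
    (∀ X : Set ↥c.supp, 2 ≤ ncomps ((G.induce Sᶜ).induce c.supp) X →
      ncomps ((G.induce Sᶜ).induce c.supp) X ≤ X.ncard) := by
    classical
  right
  intro X hX
  by_contra hlt
  push_neg at hlt
  set D := (G.induce Sᶜ).induce c.supp with hD
  set f : ↥c.supp → V := fun w => ((w : ↥Sᶜ) : V) with hf
  have hinj : Function.Injective f := fun a b h => Subtype.ext (Subtype.ext h)
  set imX : Set V := f '' X with himX
  set T : Set V := S ∪ imX with hT
  have himS : ∀ x ∈ imX, x ∉ S := by
    rintro x ⟨w, _, rfl⟩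
    exact (w : ↥Sᶜ).2
  have hTcS : ∀ v : V, v ∈ Tᶜ → v ∈ Sᶜ := by
    intro v hv
    exact fun hvS => hv (Or.inl hvS)
  let ι1 : G.induce Tᶜ →g G.induce Sᶜ :=
    ⟨fun v => ⟨(v : V), hTcS _ v.2⟩, fun {a b} h => h⟩
  have hι2mem : ∀ w : ↥(Xᶜ : Set ↥c.supp), (((w : ↥c.supp) : ↥Sᶜ) : V) ∈ Tᶜ := by
    intro w
    rintro (hw | ⟨y, hy, hyv⟩)
    · exact (w : ↥c.supp).1.2 hw
    · exact w.2 (by rwa [hinj hyv] at hy)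
  let ι2 : (D.induce (Xᶜ : Set ↥c.supp)) →g G.induce Tᶜ :=
    ⟨fun w => ⟨(((w : ↥c.supp) : ↥Sᶜ) : V), hι2mem w⟩, fun {a b} h => h⟩
  let ψ : (G.induce Tᶜ).ConnectedComponent → (G.induce Sᶜ).ConnectedComponent :=
    ConnectedComponent.map ι1
  have hrpT : ∀ d : (G.induce Sᶜ).ConnectedComponent, d ≠ c →
      ((d.exists_rep.choose : ↥Sᶜ) : V) ∈ Tᶜ := by
    intro d hd
    rintro (h | ⟨y, hy, hyv⟩)
    · exact d.exists_rep.choose.2 h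
    · apply hd
      rw [← d.exists_rep.choose_spec]
      have hy2 : (y : ↥Sᶜ) = d.exists_rep.choose := Subtype.ext hyv
      rw [← hy2]
      exact (c.mem_supp_iff _).mp y.2
  let F : {d : (G.induce Sᶜ).ConnectedComponent // d ≠ c} ⊕
      (D.induce (Xᶜ : Set ↥c.supp)).ConnectedComponent → (G.induce Tᶜ).ConnectedComponent :=
    Sum.elim
      (fun d => (G.induce Tᶜ).connectedComponentMk ⟨_, hrpT d.1 d.2⟩)
      (fun e => e.map ι2)
  have hψl : ∀ d : {d : (G.induce Sᶜ).ConnectedComponent // d ≠ c},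
      ψ (F (Sum.inl d)) = d.1 := fun d => d.1.exists_rep.choose_spec
  have hψr : ∀ e : (D.induce (Xᶜ : Set ↥c.supp)).ConnectedComponent,
      ψ (F (Sum.inr e)) = c := by
    intro e
    induction e using ConnectedComponent.ind with
    | _ w => exact (c.mem_supp_iff _).mp (w : ↥c.supp).2
  have hFinj : Function.Injective F := by
    rintro (d | e) (d' | e') h
    · have h2 := congrArg ψ h
      rw [hψl, hψl] at h2
      exact congrArg Sum.inl (Subtype.ext h2)
    · have h2 := congrArg ψ h
      rw [hψl, hψr] at h2
      exact absurd h2 d.2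
    · have h2 := congrArg ψ h
      rw [hψr, hψl] at h2
      exact absurd h2.symm d'.2
    · refine congrArg Sum.inr ?_
      revert h
      refine ConnectedComponent.ind₂ ?_ e e'
      intro w w' h
      have h' : (G.induce Tᶜ).connectedComponentMk (ι2 w) =
          (G.induce Tᶜ).connectedComponentMk (ι2 w') := h
      have hreach : (G.induce Tᶜ).Reachable (ι2 w) (ι2 w') :=
        SimpleGraph.ConnectedComponent.eq.mp h'
      obtain ⟨p⟩ := hreach
      have hsupp : ∀ u ∈ p.support, ∃ u3 : ↥(Xᶜ : Set ↥c.supp),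
          (((u3 : ↥c.supp) : ↥Sᶜ) : V) = (u : V) := by
        intro u hu
        have hu1 : (u : V) ∈ Sᶜ := hTcS _ u.2
        have hu2 : (⟨(u : V), hu1⟩ : ↥Sᶜ) ∈ c.supp := by
          have hr : (G.induce Tᶜ).Reachable (ι2 w) u := ⟨p.takeUntil u hu⟩
          have hr2 : (G.induce Sᶜ).Reachable (ι1 (ι2 w)) (ι1 u) := hr.map ι1
          rw [c.mem_supp_iff]
          have h1 : (G.induce Sᶜ).connectedComponentMk (ι1 u) =
              (G.induce Sᶜ).connectedComponentMk (ι1 (ι2 w)) :=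
            (ConnectedComponent.sound hr2).symm
          have h3 : (G.induce Sᶜ).connectedComponentMk (ι1 (ι2 w)) = c :=
            (c.mem_supp_iff _).mp (w : ↥c.supp).2
          have h4 : ι1 u = (⟨(u : V), hu1⟩ : ↥Sᶜ) := Subtype.ext rfl
          rw [← h4, h1, h3]
        have hu3 : (⟨⟨(u : V), hu1⟩, hu2⟩ : ↥c.supp) ∉ X := by
          intro hmem
          exact u.2 (Or.inr ⟨_, hmem, rfl⟩)
        exact ⟨⟨⟨⟨(u : V), hu1⟩, hu2⟩, hu3⟩, rfl⟩
      let eT : G.induce Tᶜ ↪g G := SimpleGraph.Embedding.induce Tᶜ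
      let eDX : D.induce (Xᶜ : Set ↥c.supp) ↪g G :=
        ((SimpleGraph.Embedding.induce Sᶜ).comp
          (SimpleGraph.Embedding.induce c.supp)).comp
          (SimpleGraph.Embedding.induce (Xᶜ : Set ↥c.supp))
      have hreach2 : (D.induce (Xᶜ : Set ↥c.supp)).Reachable w w' := by
        refine reach_aux eDX (p.map eT.toHom) ?_ w w' rfl rfl
        intro z hz
        rw [Walk.support_map] at hz
        obtain ⟨u, hu, rfl⟩ := List.mem_map.mp hz
        obtain ⟨u3, hu3⟩ := hsupp u hu
        exact ⟨u3, hu3⟩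
      exact ConnectedComponent.sound hreach2
  haveI : Finite (G.induce Tᶜ).ConnectedComponent :=
    Finite.of_surjective _ Quot.mk_surjective
  haveI : Finite (G.induce Sᶜ).ConnectedComponent :=
    Finite.of_surjective _ Quot.mk_surjective
  haveI : Finite (D.induce (Xᶜ : Set ↥c.supp)).ConnectedComponent :=
    Finite.of_surjective _ Quot.mk_surjective
  have hcard := Nat.card_le_card_of_injective F hFinj
  rw [Nat.card_sum] at hcard
  have h1 : Nat.card {d : (G.induce Sᶜ).ConnectedComponent // d ≠ c} = ncomps G S - 1 := by
    haveI := Fintype.ofFinite (G.induce Sᶜ).ConnectedComponent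
    rw [Nat.card_eq_fintype_card, ncomps, Nat.card_eq_fintype_card]
    rw [Fintype.card_subtype_compl, Fintype.card_subtype_eq]
  have key : ncomps G S - 1 + ncomps D X ≤ ncomps G T := by
    rw [h1] at hcard
    exact hcard
  have hGS2 : 2 ≤ ncomps G S := hS.1.1
  rcases X.eq_empty_or_nonempty with hXe | hXne
  · have hTS : T = S := by
      rw [hT, himX, hXe, Set.image_empty, Set.union_empty]
    rw [hTS] at key
    omega
  · have hT2 : 2 ≤ ncomps G T := by omega
    have hTcard : T.ncard = S.ncard + X.ncard := by
      rw [hT, Set.ncard_union_eq (Set.disjoint_right.mpr himS) S.toFinite imX.toFinite,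
        himX, Set.ncard_image_of_injective X hinj]
    have hge : (ncomps G S : ℤ) - (S.ncard : ℤ) ≤ (ncomps G T : ℤ) - (T.ncard : ℤ) := by
      push_cast
      omega
    have hscat : IsScatSet G T :=
      ⟨hT2, fun U hU => le_trans (hS.1.2 U hU) hge⟩
    have hST : S = T := hS.2 T hscat Set.subset_union_left
    obtain ⟨w, hw⟩ := hXne
    have hmem : f w ∈ T := Or.inr ⟨w, hw, rfl⟩
    rw [← hST] at hmem
    exact (w : ↥Sᶜ).2 hmem
end

section
/- Let $G$ be a $P_4$-free non-complete graph with scattering number $s(G) \ge 0$ and let $S \subseteq V(G)$ be a maximal scattering set of $G$. Then for every proper subset $S^*$ of $S$, the set $S \setminus S^*$ is a maximal scattering set of the graph $G - S^*$. -/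
open SimpleGraph

lemma key {V : Type*} (G : SimpleGraph V) (S' : Set V) (W : Set ↥S'ᶜ) :
    ncomps (G.induce S'ᶜ) W = ncomps G (S' ∪ (↑) '' W) := by
  apply Nat.card_congr
  apply Iso.connectedComponentEquiv
  refine ⟨?_, ?_⟩
  · exact {
      toFun := fun x => ⟨(x.1 : V), by
        rintro (h | ⟨y, hy, hyv⟩)
        · exact x.1.2 h
        · exact x.2 (by rwa [show y = x.1 from Subtype.ext hyv] at hy)⟩
      invFun := fun v => ⟨⟨(v : V), fun h => v.2 (Or.inl h)⟩,
        fun h => v.2 (Or.inr ⟨_, h, rfl⟩)⟩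
      left_inv := fun x => rfl
      right_inv := fun v => rfl }
  · intro a b
    rfl

lemma ncard_key {V : Type*} [Fintype V] (S' : Set V) (W : Set ↥S'ᶜ) :
    ((S' ∪ (↑) '' W).ncard : ℤ) = S'.ncard + W.ncard := by
  have hd : Disjoint S' (Subtype.val '' W) := by
    rw [Set.disjoint_left]
    rintro a ha ⟨y, _, hy⟩
    exact (hy ▸ y.2) ha
  rw [Set.ncard_union_eq hd (Set.toFinite _) (Set.toFinite _),
    Set.ncard_image_of_injective _ Subtype.val_injective]
  push_cast; ring

theorem stmt7 {V : Type*} [Fintype V] (G : SimpleGraph V) (hfree : P4Free G)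
    (S : Set V) (hS : IsMaxScatSet G S) (h0 : S.ncard ≤ ncomps G S)
    (S' : Set V) (hss : S' ⊂ S) :
    IsMaxScatSet (G.induce S'ᶜ) {v : ↥S'ᶜ | (v : V) ∈ S} := by

  set T : Set ↥S'ᶜ := {v : ↥S'ᶜ | (v : V) ∈ S} with hT
  have hTS : S' ∪ (↑) '' T = S := by
    apply Set.Subset.antisymm
    · rintro v (h | ⟨y, hy, rfl⟩)
      · exact hss.1 h
      · exact hy
    · intro v hv
      by_cases h : v ∈ S'
      · exact Or.inl h
      · exact Or.inr ⟨⟨v, h⟩, hv, rfl⟩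
  have hcard : (S.ncard : ℤ) = S'.ncard + T.ncard := by rw [← hTS]; exact ncard_key S' T
  have hcompT : ncomps (G.induce S'ᶜ) T = ncomps G S := by rw [key, hTS]
  have hscat : IsScatSet (G.induce S'ᶜ) T := by
    constructor
    · rw [hcompT]; exact hS.1.1
    · intro W hW
      have h1 := hS.1.2 (S' ∪ (↑) '' W) (by rwa [← key])
      have h2 := ncard_key S' W
      rw [key, hcompT]
      linarith
  refine ⟨hscat, fun T' hT' hTT' => ?_⟩
  have hU : IsScatSet G (S' ∪ (↑) '' T') := by
    constructor
    · rw [← key]; exact hT'.1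
    · intro W hW
      have h1 := hS.1.2 W hW
      have h2 := hT'.2 T hscat.1
      rw [hcompT] at h2
      have h3 := ncard_key S' T'
      rw [← key]
      linarith
  have hSU : S ⊆ S' ∪ (↑) '' T' := by
    rw [← hTS]
    exact Set.union_subset_union_right _ (Set.image_mono hTT')
  have heq := hS.2 _ hU hSU
  apply Set.Subset.antisymm hTT'
  intro x hx
  show (x : V) ∈ S
  rw [heq]
  exact Or.inr ⟨x, hx, rfl⟩
end

section
/- Let $t \ge 2$ be a real number, $G$ a graph, and $S$ a cutset of $G$ such that $G$ is $t$-tough with respect to $S$. Set $r = \lfloor t/2 \rfloor$. Then for every component $D$ of $G-S$, the bipartite subgraph of $G$ consisting of all edges between $V(D)$ and $N_G(V(D)) \cap S$ contains a matching of size at least $\min\{|V(D)|, r\}$. -/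
open SimpleGraph

private lemma walk_closed_s9 {V : Type*} (G : SimpleGraph V) (W : Set V) (P : Set V)
    (hP : ∀ u ∈ P, ∀ w, G.Adj u w → w ∉ W → w ∈ P) :
    ∀ {x y : ↥Wᶜ}, (G.induce Wᶜ).Walk x y → (x : V) ∈ P → (y : V) ∈ P := by
  intro x y p
  induction p with
  | nil => exact id
  | @cons x' y' z' h p ih =>
    intro hx
    refine ih (hP _ hx _ ?_ ?_)
    · exact h
    · exact y'.2

theorem stmt9 {V : Type*} [Fintype V] (G : SimpleGraph V) (t : ℝ) (ht : 2 ≤ t)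
    (S : Set V) (hS : IsCutset G S) (htough : ToughWrt t G S)
    (c : (G.induce Sᶜ).ConnectedComponent) (A B : Set V)
    (hA : A = {v : V | ∃ h : v ∈ Sᶜ, (G.induce Sᶜ).connectedComponentMk ⟨v, h⟩ = c})
    (hB : B = {v : V | v ∈ S ∧ ∃ u ∈ A, G.Adj v u}) :
    ∃ a b : Fin (min A.ncard ⌊t / 2⌋₊) → V,
      Function.Injective a ∧ Function.Injective b ∧
      ∀ i, a i ∈ A ∧ b i ∈ B ∧ G.Adj (a i) (b i) := by
  classical
  rcases Nat.eq_zero_or_pos (min A.ncard ⌊t / 2⌋₊) with h0 | hkpos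
  · rw [h0]
    exact ⟨Fin.elim0, Fin.elim0, Function.injective_of_subsingleton _,
      Function.injective_of_subsingleton _, fun i => i.elim0⟩
  have hAS : A ⊆ Sᶜ := by
    intro v hv; rw [hA] at hv; obtain ⟨h, -⟩ := hv; exact h
  have hBS : B ⊆ S := by intro v hv; rw [hB] at hv; exact hv.1
  set r := ⌊t / 2⌋₊ with hrdef
  set k := min A.ncard r with hkdef
  have hAfin : A.Finite := Set.toFinite A
  set A' : Finset V := hAfin.toFinset with hA'def
  have hA'card : A'.card = A.ncard := (Set.ncard_eq_toFinset_card A hAfin).symm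
  have hmemA' : ∀ v, v ∈ A' ↔ v ∈ A := fun v => hAfin.mem_toFinset
  have hkA : k ≤ A'.card := by rw [hA'card]; exact min_le_left _ _
  set d := A'.card - k with hddef
  set nb : ↥A' → Finset V :=
    fun a => Finset.univ.filter (fun v => v ∈ B ∧ G.Adj (↑a) v) with hnb
  set inlE : V ↪ V ⊕ Fin d := ⟨Sum.inl, Sum.inl_injective⟩ with hinlE
  set inrE : Fin d ↪ V ⊕ Fin d := ⟨Sum.inr, Sum.inr_injective⟩ with hinrE
  set tt : ↥A' → Finset (V ⊕ Fin d) :=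
    fun a => (nb a).map inlE ∪ Finset.univ.map inrE with htt
  by_cases hHall : ∀ s : Finset ↥A', s.card ≤ (s.biUnion tt).card
  · obtain ⟨f, hfinj, hft⟩ :=
      (Finset.all_card_le_biUnion_card_iff_exists_injective tt).mp hHall
    set R : Finset ↥A' := Finset.univ.filter (fun a => (f a).isRight) with hR
    have hR_card : R.card ≤ d := by
      have h1 : R.card = (R.image f).card :=
        (Finset.card_image_of_injective _ hfinj).symm
      have h2 : R.image f ⊆ Finset.univ.map inrE := by
        intro x hx
        simp only [Finset.mem_image] at hx
        obtain ⟨a, ha, rfl⟩ := hx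
        rw [hR, Finset.mem_filter] at ha
        obtain ⟨j, hj⟩ := Sum.isRight_iff.mp ha.2
        rw [hj]
        exact Finset.mem_map_of_mem _ (Finset.mem_univ j)
      calc R.card = (R.image f).card := h1
        _ ≤ (Finset.univ.map inrE).card := Finset.card_le_card h2
        _ = d := by simp
    set L : Finset ↥A' := Finset.univ.filter (fun a => (f a).isLeft) with hL
    have hLR : L.card + R.card = A'.card := by
      rw [hL, hR]
      have h := Finset.card_filter_add_card_filter_not
        (s := (Finset.univ : Finset ↥A')) (p := fun a => (f a).isLeft)
      simp only [Sum.not_isLeft] at h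
      simpa [Finset.card_univ] using h
    have hkL : k ≤ L.card := by omega
    obtain ⟨L', hL'sub, hL'card⟩ := Finset.exists_subset_card_eq hkL
    set e : Fin k ≃ ↥L' := ((L'.equivFin).trans (finCongr hL'card)).symm with he
    have hleft : ∀ i : Fin k, ∃ y, f (e i).1 = Sum.inl y := by
      intro i
      have hmem := hL'sub (e i).2
      rw [hL, Finset.mem_filter] at hmem
      exact Sum.isLeft_iff.mp hmem.2
    refine ⟨fun i => (((e i).1 : ↥A') : V), fun i => (hleft i).choose, ?_, ?_, ?_⟩
    · intro i j hij
      apply e.injective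
      exact Subtype.ext (Subtype.ext hij)
    · intro i j hij
      apply e.injective
      apply Subtype.ext
      apply hfinj
      rw [(hleft i).choose_spec, (hleft j).choose_spec]
      exact congrArg Sum.inl hij
    · intro i
      have hmem := hft (e i).1
      rw [htt] at hmem
      simp only [Finset.mem_union] at hmem
      have hspec := (hleft i).choose_spec
      rcases hmem with hm | hm
      · rw [Finset.mem_map] at hm
        obtain ⟨v, hv, hv2⟩ := hm
        have hvb : v = (hleft i).choose := by
          apply Sum.inl_injective
          rw [hspec] at hv2
          exact hv2
        rw [hnb, Finset.mem_filter] at hv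
        subst hvb
        exact ⟨(hmemA' _).mp ((e i).1).2, hv.2.1, hv.2.2⟩
      · exfalso
        rw [Finset.mem_map] at hm
        obtain ⟨j, -, hj⟩ := hm
        rw [hspec] at hj
        simp [hinrE] at hj
  · push_neg at hHall
    obtain ⟨s, hs⟩ := hHall
    exfalso
    have hsne : s.Nonempty := by
      rcases s.eq_empty_or_nonempty with rfl | h
      · simp at hs
      · exact h
    set N : Finset V := s.biUnion nb with hN
    have hNd : N.card + d ≤ (s.biUnion tt).card := by
      have hsub : N.map inlE ∪ Finset.univ.map inrE ⊆ s.biUnion tt := by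
        intro x hx
        rw [Finset.mem_union] at hx
        rcases hx with hx | hx
        · rw [Finset.mem_map] at hx
          obtain ⟨v, hv, rfl⟩ := hx
          rw [hN, Finset.mem_biUnion] at hv
          obtain ⟨a, ha, hva⟩ := hv
          exact Finset.mem_biUnion.mpr
            ⟨a, ha, Finset.mem_union_left _ (Finset.mem_map_of_mem _ hva)⟩
        · obtain ⟨a, ha⟩ := hsne
          exact Finset.mem_biUnion.mpr ⟨a, ha, Finset.mem_union_right _ hx⟩
      have hdisj : Disjoint (N.map inlE) (Finset.univ.map inrE) := by
        rw [Finset.disjoint_left]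
        intro x hx hx'
        rw [Finset.mem_map] at hx hx'
        obtain ⟨v, -, rfl⟩ := hx
        obtain ⟨j, -, hj⟩ := hx'
        exact Sum.inl_ne_inr hj.symm
      calc N.card + d = (N.map inlE ∪ Finset.univ.map inrE).card := by
            rw [Finset.card_union_of_disjoint hdisj]; simp
        _ ≤ _ := Finset.card_le_card hsub
    have hNs : N.card + d < s.card := lt_of_le_of_lt hNd hs
    set X : Finset V := s.image Subtype.val with hX
    have hXcard : X.card = s.card := Finset.card_image_of_injective _ Subtype.val_injective
    have hXA' : X ⊆ A' := by
      intro v hv; rw [hX, Finset.mem_image] at hv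
      obtain ⟨a, -, rfl⟩ := hv; exact a.2
    set C : Finset V := (A' \ X) ∪ N with hC
    have hsA' : s.card ≤ A'.card := by
      have h := Finset.card_le_univ s
      simpa [Finset.card_univ] using h
    have hCk : C.card < k := by
      have h1 : C.card ≤ (A' \ X).card + N.card := Finset.card_union_le _ _
      have h2 : (A' \ X).card = A'.card - X.card := Finset.card_sdiff_of_subset hXA'
      omega
    have hNB : ∀ v ∈ N, v ∈ B := by
      intro v hv; rw [hN, Finset.mem_biUnion] at hv
      obtain ⟨a, -, hva⟩ := hv
      rw [hnb, Finset.mem_filter] at hva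
      exact hva.2.1
    have hCsub : ∀ v, v ∈ C → v ∈ A ∨ v ∈ S := by
      intro v hv
      rw [hC, Finset.mem_union] at hv
      rcases hv with hv | hv
      · exact Or.inl ((hmemA' v).mp (Finset.mem_sdiff.mp hv).1)
      · exact Or.inr (hBS (hNB v hv))
    have hP : ∀ u ∈ (↑X : Set V), ∀ w, G.Adj u w → w ∉ (↑C : Set V) → w ∈ (↑X : Set V) := by
      intro u hu w hadj hwC
      rw [Finset.mem_coe] at hu ⊢
      rw [Finset.mem_coe] at hwC
      have huA : u ∈ A := (hmemA' u).mp (hXA' hu)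
      by_cases hwS : w ∈ S
      · exfalso
        apply hwC
        have hwB : w ∈ B := by rw [hB]; exact ⟨hwS, u, huA, hadj.symm⟩
        rw [hX, Finset.mem_image] at hu
        obtain ⟨a, ha, rfl⟩ := hu
        apply Finset.mem_union_right
        rw [hN]
        refine Finset.mem_biUnion.mpr ⟨a, ha, ?_⟩
        rw [hnb, Finset.mem_filter]
        exact ⟨Finset.mem_univ _, hwB, hadj⟩
      · have hwA : w ∈ A := by
          rw [hA] at huA ⊢
          obtain ⟨hu1, hu2⟩ := huA
          refine ⟨hwS, ?_⟩
          rw [← hu2]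
          have hadj' : (G.induce Sᶜ).Adj ⟨w, hwS⟩ ⟨u, hu1⟩ := hadj.symm
          exact SimpleGraph.ConnectedComponent.connectedComponentMk_eq_of_adj hadj'
        have hwA' : w ∈ A' := (hmemA' w).mpr hwA
        rw [hC, Finset.mem_union, not_or] at hwC
        by_contra hwX
        exact hwC.1 (Finset.mem_sdiff.mpr ⟨hwA', hwX⟩)
    obtain ⟨u0, hu0⟩ := hsne
    have hu0X : (u0 : V) ∈ X := Finset.mem_image_of_mem _ hu0
    have hu0A : (u0 : V) ∈ A := (hmemA' _).mp u0.2
    have hu0S : (u0 : V) ∈ Sᶜ := hAS hu0A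
    have hu0C : (u0 : V) ∉ (↑C : Set V) := by
      rw [Finset.mem_coe, hC, Finset.mem_union, not_or]
      constructor
      · intro h; exact (Finset.mem_sdiff.mp h).2 hu0X
      · intro h; exact hu0S (hBS (hNB _ h))
    have hSnontriv : Nontrivial (G.induce Sᶜ).ConnectedComponent := by
      unfold IsCutset ncomps at hS
      exact Finite.one_lt_card_iff_nontrivial.mp hS
    obtain ⟨c₂, hc₂⟩ := exists_ne c
    obtain ⟨v0, hv0⟩ := Quot.exists_rep c₂
    have hv0A : (v0 : V) ∉ A := by
      intro hmem
      rw [hA] at hmem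
      obtain ⟨h1, h2⟩ := hmem
      apply hc₂
      have heq : (⟨(v0 : V), h1⟩ : ↥Sᶜ) = v0 := Subtype.ext rfl
      rw [heq] at h2
      rw [← hv0]
      exact h2
    have hv0C : (v0 : V) ∉ (↑C : Set V) := by
      intro h
      rcases hCsub _ (Finset.mem_coe.mp h) with h' | h'
      · exact hv0A h'
      · exact v0.2 h'
    have hnecomp : (G.induce (↑C : Set V)ᶜ).connectedComponentMk ⟨(u0 : V), hu0C⟩ ≠
        (G.induce (↑C : Set V)ᶜ).connectedComponentMk ⟨(v0 : V), hv0C⟩ := by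
      intro hcc
      have hreach := SimpleGraph.ConnectedComponent.exact hcc
      obtain ⟨p⟩ := hreach
      have hres := walk_closed_s9 G (↑C) (↑X) hP p hu0X
      exact hv0A ((hmemA' _).mp (hXA' (Finset.mem_coe.mp hres)))
    have h2comp : 2 ≤ ncomps G (↑C : Set V) := by
      have hnt : Nontrivial (G.induce (↑C : Set V)ᶜ).ConnectedComponent := ⟨_, _, hnecomp⟩
      unfold ncomps
      exact Finite.one_lt_card_iff_nontrivial.mpr hnt
    have hrep : ∀ c' : (G.induce Sᶜ).ConnectedComponent,
        ∃ v : ↥Sᶜ, (G.induce Sᶜ).connectedComponentMk v = c' ∧ (v : V) ∉ (↑C : Set V) := by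
      intro c'
      by_cases hc' : c' = c
      · subst hc'
        have hmem := hu0A
        rw [hA] at hmem
        obtain ⟨h1, h2⟩ := hmem
        exact ⟨⟨(u0 : V), h1⟩, h2, hu0C⟩
      · obtain ⟨w0, hw0⟩ := Quot.exists_rep c'
        refine ⟨w0, hw0, ?_⟩
        intro hmem
        rcases hCsub _ (Finset.mem_coe.mp hmem) with hw | hw
        · rw [hA] at hw
          obtain ⟨h1, h2⟩ := hw
          apply hc'
          have heq : (⟨(w0 : V), h1⟩ : ↥Sᶜ) = w0 := Subtype.ext rfl
          rw [heq] at h2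
          rw [← hw0]
          exact h2
        · exact w0.2 hw
    unfold ToughWrt at htough
    have hineq := htough (↑C) h2comp hrep
    rw [Set.ncard_coe_finset] at hineq
    have hkr : (k : ℝ) ≤ t / 2 := by
      have h1 : k ≤ r := min_le_right _ _
      have h2 : (r : ℝ) ≤ t / 2 := Nat.floor_le (by linarith)
      calc (k : ℝ) ≤ (r : ℝ) := Nat.cast_le.mpr h1
        _ ≤ t / 2 := h2
    have hn2 : (2 : ℝ) ≤ (ncomps G (↑C : Set V) : ℝ) := by exact_mod_cast h2comp
    have ht2 : t * 2 ≤ t * (ncomps G (↑C : Set V) : ℝ) := by nlinarith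
    have hck : (C.card : ℝ) < (k : ℝ) := by exact_mod_cast hCk
    linarith
end

section
/- Let $t > 0$ be a real number and let $G$ be a $t$-tough graph on $n$ vertices containing a non-Hamiltonian cycle $C$. If $H$ is a connected subgraph of $G - V(C)$ such that the number of vertices of $C$ having a neighbor in $H$ is greater than $\frac{n}{t+1} - 1$, then $G$ has a cycle $C^*$ with $V(C) \subseteq V(C^*)$ and $V(C^*) \cap V(H) \ne \emptyset$. -/
open SimpleGraph

namespace ToughAux

open SimpleGraph Walk

variable {V : Type*} {G : SimpleGraph V}

lemma mem_tail_of_mem_support {v : V} {p : G.Walk v v} (hp : ¬ p.Nil) {x : V}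
    (hx : x ∈ p.support) : x ∈ p.support.tail := by
  cases p with
  | nil => simp at hp
  | cons h q =>
    rw [Walk.support_cons, List.tail_cons]
    rcases List.mem_cons.1 (by rwa [Walk.support_cons] at hx) with rfl | h'
    · exact q.end_mem_support
    · exact h'

lemma dropLast_support_nodup {v : V} {p : G.Walk v v} (hp : p.IsCycle) :
    p.support.dropLast.Nodup := by
  cases p with
  | nil => simp
  | cons h q =>
    rw [Walk.cons_isCycle_iff] at hp
    have hq : q.support ≠ [] := q.support_ne_nil
    rw [Walk.support_cons, List.dropLast_cons_of_ne_nil hq]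
    have hlast : q.support.getLast hq = v := q.getLast_support
    have hnodup := hp.1.support_nodup
    have hdecomp := List.dropLast_append_getLast hq
    refine List.nodup_cons.2 ⟨?_, ?_⟩
    · intro hv
      rw [← hdecomp, hlast] at hnodup
      exact (List.disjoint_of_nodup_append hnodup) hv (List.mem_singleton_self v)
    · rw [← hdecomp] at hnodup
      exact hnodup.of_append_left

lemma darts_fst_nodup {v : V} {p : G.Walk v v} (hp : p.IsCycle) :
    (p.darts.map (·.fst)).Nodup := by
  rw [Walk.map_fst_darts]; exact dropLast_support_nodup hp

lemma darts_snd_nodup {v : V} {p : G.Walk v v} (hp : p.IsCycle) :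
    (p.darts.map (·.snd)).Nodup := by
  rw [Walk.map_snd_darts]; exact hp.support_nodup

variable [DecidableEq V]

/-- The successor of a vertex along a closed walk. -/
def csucc {v : V} (C : G.Walk v v) (x : V) : V :=
  if hx : x ∈ C.support then (C.rotate x hx).getVert 1 else x

lemma cycle_not_nil {v : V} {C : G.Walk v v} (hC : C.IsCycle) : ¬ C.Nil := by
  rw [Walk.not_nil_iff_lt_length]
  have := hC.three_le_length; omega

lemma rotate_decomp {v x : V} {C : G.Walk v v} (hC : C.IsCycle) (hx : x ∈ C.support) :
    ∃ (h : G.Adj x (csucc C x)) (R : G.Walk (csucc C x) x), C.rotate x hx = Walk.cons h R := by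
  have hcyc := hC.rotate hx
  have hnn : ¬ (C.rotate x hx).Nil := cycle_not_nil hcyc
  rw [Walk.not_nil_iff] at hnn
  obtain ⟨u, hadj, q, hq⟩ := hnn
  have h1 : csucc C x = u := by
    rw [csucc, dif_pos hx, hq]; simp [Walk.getVert_cons_succ]
  rw [h1]
  exact ⟨hadj, q, hq⟩

lemma csucc_dart {v x : V} {C : G.Walk v v} (hC : C.IsCycle) (hx : x ∈ C.support) :
    ∃ d : G.Dart, d ∈ C.darts ∧ d.toProd = (x, csucc C x) := by
  obtain ⟨hadj, R, hR⟩ := rotate_decomp hC hx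
  refine ⟨⟨(x, csucc C x), hadj⟩, ?_, rfl⟩
  have : (⟨(x, csucc C x), hadj⟩ : G.Dart) ∈ (C.rotate x hx).darts := by
    rw [hR, Walk.darts_cons]; exact List.mem_cons_self
  exact (C.rotate_darts x hx).mem_iff.1 this

lemma csucc_adj {v x : V} {C : G.Walk v v} (hC : C.IsCycle) (hx : x ∈ C.support) :
    G.Adj x (csucc C x) := by
  obtain ⟨hadj, _, _⟩ := rotate_decomp hC hx
  exact hadj

lemma csucc_mem_support {v x : V} {C : G.Walk v v} (hC : C.IsCycle) (hx : x ∈ C.support) :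
    csucc C x ∈ C.support := by
  obtain ⟨d, hd, hdp⟩ := csucc_dart hC hx
  have h2 : d.snd = csucc C x := congrArg Prod.snd hdp
  have := C.dart_snd_mem_support_of_mem_darts hd
  rwa [h2] at this

lemma csucc_injOn {v x y : V} {C : G.Walk v v} (hC : C.IsCycle) (hx : x ∈ C.support)
    (hy : y ∈ C.support) (h : csucc C x = csucc C y) : x = y := by
  obtain ⟨d1, hd1, hp1⟩ := csucc_dart hC hx
  obtain ⟨d2, hd2, hp2⟩ := csucc_dart hC hy
  have hsnd : d1.snd = d2.snd := by
    have e1 : d1.snd = csucc C x := congrArg Prod.snd hp1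
    have e2 : d2.snd = csucc C y := congrArg Prod.snd hp2
    rw [e1, e2, h]
  have he : d1 = d2 := List.inj_on_of_nodup_map (darts_snd_nodup hC) hd1 hd2 hsnd
  have e1 : d1.fst = x := congrArg Prod.fst hp1
  have e2 : d2.fst = y := congrArg Prod.fst hp2
  rw [← e1, ← e2, he]

lemma csucc_eq_of_dart {v : V} {C : G.Walk v v} (hC : C.IsCycle) {d : G.Dart}
    (hd : d ∈ C.darts) : csucc C d.fst = d.snd := by
  obtain ⟨d', hd', hp'⟩ := csucc_dart hC (C.dart_fst_mem_support_of_mem_darts hd)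
  have hf : d'.fst = d.fst := by rw [hp']
  have he : d' = d := List.inj_on_of_nodup_map (darts_fst_nodup hC) hd' hd hf
  have e1 : d'.snd = csucc C d.fst := congrArg Prod.snd hp'
  rw [← e1, he]

lemma mem_rotate_support {v x y : V} {C : G.Walk v v} (hC : C.IsCycle) (hx : x ∈ C.support) :
    y ∈ (C.rotate x hx).support ↔ y ∈ C.support := by
  have h1 : ¬ C.Nil := cycle_not_nil hC
  have h2 : ¬ (C.rotate x hx).Nil := cycle_not_nil (hC.rotate hx)
  have hr := (C.support_rotate x hx).mem_iff (a := y)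
  constructor
  · intro h
    exact List.mem_of_mem_tail (hr.1 (mem_tail_of_mem_support h2 h))
  · intro h
    exact List.mem_of_mem_tail (hr.2 (mem_tail_of_mem_support h1 h))

lemma exists_path_in {A : Set V} (hconn : (G.induce A).Connected) {p q : V}
    (hp : p ∈ A) (hq : q ∈ A) :
    ∃ P : G.Walk p q, P.IsPath ∧ ∀ x ∈ P.support, x ∈ A := by
  obtain ⟨w⟩ := hconn.preconnected ⟨p, hp⟩ ⟨q, hq⟩
  let P0 : (G.induce A).Walk ⟨p, hp⟩ ⟨q, hq⟩ := (w.toPath : (G.induce A).Path _ _)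
  have hP0 : P0.IsPath := w.toPath.2
  refine ⟨P0.map (Embedding.induce A).toHom, ?_, ?_⟩
  · exact Walk.map_isPath_of_injective (Subtype.val_injective) hP0
  · intro x hx
    have hx : x ∈ P0.support.map (Embedding.induce (G := G) A).toHom := by rw [← Walk.support_map]; exact hx
    rw [List.mem_map] at hx
    obtain ⟨⟨s, hs⟩, _, rfl⟩ := hx
    exact hs

lemma ncomps_of_indep [Fintype V] {s : Set V}
    (h : ∀ x ∈ s, ∀ y ∈ s, ¬ G.Adj x y) : ncomps G sᶜ = s.ncard := by
  have hbot : G.induce s = ⊥ := by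
    ext ⟨x, hx⟩ ⟨y, hy⟩
    simp only [comap_adj, Function.Embedding.coe_subtype, bot_adj, iff_false]
    exact h x hx y hy
  unfold ncomps
  rw [compl_compl, hbot]
  have hbij : Function.Bijective ((⊥ : SimpleGraph s).connectedComponentMk) := by
    constructor
    · intro a b hab
      exact reachable_bot.1 ((ConnectedComponent.eq).1 hab)
    · exact fun c => c.exists_rep
  rw [← Nat.card_eq_of_bijective _ hbij, Nat.card_coe_set_eq]

end ToughAux


theorem stmt13 {V : Type*} [Fintype V] (G : SimpleGraph V) (t : ℝ) (ht : 0 < t)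
    (htough : Tough t G)
    (v0 : V) (C : G.Walk v0 v0) (hC : C.IsCycle) (hnonham : ∃ x : V, x ∉ C.support)
    (A : Set V) (hdisj : ∀ x ∈ A, x ∉ C.support) (hconn : (G.induce A).Connected)
    (hnbr : (Fintype.card V : ℝ) / (t + 1) - 1 <
      ({v : V | v ∈ C.support ∧ ∃ u ∈ A, G.Adj v u}.ncard : ℝ)) :
    ∃ (w : V) (C' : G.Walk w w), C'.IsCycle ∧ (∀ x ∈ C.support, x ∈ C'.support) ∧
      ∃ y ∈ A, y ∈ C'.support := by
  classical
  set W : Set V := {v : V | v ∈ C.support ∧ ∃ u ∈ A, G.Adj v u} with hWdef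
  by_cases hA : ∃ u ∈ W, ToughAux.csucc C u ∈ W
  · -- Case A: two consecutive vertices of C have neighbours in A
    obtain ⟨u, huW, hzW⟩ := hA
    obtain ⟨huC, p, hpA, hup⟩ := huW
    obtain ⟨hzC, q, hqA, hzq⟩ := hzW
    obtain ⟨hadj, R, hR⟩ := ToughAux.rotate_decomp hC huC
    have hrot := hC.rotate huC
    rw [hR] at hrot
    have hRpath : R.IsPath := ((Walk.cons_isCycle_iff R hadj).1 hrot).1
    have hRsub : ∀ x ∈ R.support, x ∈ C.support := by
      intro x hx
      exact (ToughAux.mem_rotate_support hC huC).1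
        (by rw [hR, Walk.support_cons]; exact List.mem_cons_of_mem _ hx)
    have hCsub : ∀ x ∈ C.support, x = u ∨ x ∈ R.support := by
      intro x hx
      have h1 := (ToughAux.mem_rotate_support hC huC).2 hx
      rw [hR, Walk.support_cons] at h1
      exact List.mem_cons.1 h1
    obtain ⟨PA, hPApath, hPAsub⟩ := ToughAux.exists_path_in hconn hpA hqA
    set X : G.Walk p u := PA.append (Walk.cons hzq.symm R) with hX
    have hXsupp : X.support = PA.support ++ R.support := by
      rw [hX, Walk.support_append, Walk.support_cons, List.tail_cons]
    have hXpath : X.IsPath := by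
      rw [Walk.isPath_def, hXsupp]
      refine List.Nodup.append hPApath.support_nodup hRpath.support_nodup ?_
      intro x hx1 hx2
      exact hdisj x (hPAsub x hx1) (hRsub x hx2)
    have hedge : s(u, p) ∉ X.edges := by
      rw [hX, Walk.edges_append, Walk.edges_cons]
      intro hmem
      rcases List.mem_append.1 hmem with h1 | h2
      · exact hdisj u (hPAsub u (PA.fst_mem_support_of_mem_edges h1)) huC
      · rcases List.mem_cons.1 h2 with heq | h3
        · rw [Sym2.eq_iff] at heq
          rcases heq with ⟨h4, h5⟩ | ⟨h4, h5⟩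
          · exact hdisj q hqA (h4 ▸ huC)
          · exact hadj.ne h4
        · exact hdisj p hpA (hRsub p (R.snd_mem_support_of_mem_edges h3))
    refine ⟨u, Walk.cons hup X, (Walk.cons_isCycle_iff X hup).2 ⟨hXpath, hedge⟩, ?_, p, hpA, ?_⟩
    · intro x hx
      rw [Walk.support_cons]
      rcases hCsub x hx with rfl | hxR
      · exact List.mem_cons_self
      · exact List.mem_cons_of_mem _ (by rw [hXsupp]; exact List.mem_append_right _ hxR)
    · rw [Walk.support_cons]
      exact List.mem_cons_of_mem _ X.start_mem_support
  push_neg at hA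
  by_cases hB : ∃ u ∈ W, ∃ v ∈ W, u ≠ v ∧ G.Adj (ToughAux.csucc C u) (ToughAux.csucc C v)
  · -- Case B: a crossing chord between successors
    obtain ⟨u, huW, v, hvW, huv, hzw⟩ := hB
    have hz_notW := hA u huW
    have hw_notW := hA v hvW
    obtain ⟨huC, p, hpA, hup⟩ := huW
    obtain ⟨hvC, q, hqA, hvq⟩ := hvW
    obtain ⟨hadj, R, hR⟩ := ToughAux.rotate_decomp hC huC
    have hrot := hC.rotate huC
    rw [hR] at hrot
    have hRpath : R.IsPath := ((Walk.cons_isCycle_iff R hadj).1 hrot).1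
    have hRsub : ∀ x ∈ R.support, x ∈ C.support := by
      intro x hx
      exact (ToughAux.mem_rotate_support hC huC).1
        (by rw [hR, Walk.support_cons]; exact List.mem_cons_of_mem _ hx)
    have hCsub : ∀ x ∈ C.support, x = u ∨ x ∈ R.support := by
      intro x hx
      have h1 := (ToughAux.mem_rotate_support hC huC).2 hx
      rw [hR, Walk.support_cons] at h1
      exact List.mem_cons.1 h1
    have hvR : v ∈ R.support := by
      rcases hCsub v hvC with h | h
      · exact absurd h.symm huv
      · exact h
    set P := R.takeUntil v hvR with hPdef
    set Q := R.dropUntil v hvR with hQdef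
    have hPQ : P.append Q = R := R.take_spec hvR
    have hQnn : ¬ Q.Nil := Walk.not_nil_of_ne huv.symm
    rw [Walk.not_nil_iff] at hQnn
    obtain ⟨w', h', Q', hQ⟩ := hQnn
    have hdartmem : (⟨(v, w'), h'⟩ : G.Dart) ∈ C.darts := by
      have h1 : (⟨(v, w'), h'⟩ : G.Dart) ∈ Q.darts := by
        rw [hQ, Walk.darts_cons]; exact List.mem_cons_self
      have h2 := R.darts_dropUntil_subset hvR h1
      have h3 : (⟨(v, w'), h'⟩ : G.Dart) ∈ (C.rotate u huC).darts := by
        rw [hR, Walk.darts_cons]; exact List.mem_cons_of_mem _ h2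
      exact (C.rotate_darts u huC).mem_iff.1 h3
    have hw' : ToughAux.csucc C v = w' := ToughAux.csucc_eq_of_dart hC hdartmem
    rw [hw'] at hzw hw_notW
    have hPpath : P.IsPath := hRpath.takeUntil hvR
    have hQpath : Q.IsPath := hRpath.dropUntil hvR
    have hQ'path : Q'.IsPath := by rw [hQ] at hQpath; exact hQpath.of_cons
    have hRsupp : R.support = P.support ++ Q'.support := by
      rw [← hPQ, Walk.support_append, hQ, Walk.support_cons, List.tail_cons]
    have hdisjPQ : P.support.Disjoint Q'.support := by
      have h1 := hRpath.support_nodup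
      rw [hRsupp] at h1
      exact List.disjoint_of_nodup_append h1
    have hPsub : ∀ x ∈ P.support, x ∈ C.support := fun x hx =>
      hRsub x (R.support_takeUntil_subset hvR hx)
    have hQ'sub : ∀ x ∈ Q'.support, x ∈ C.support := by
      intro x hx
      refine hRsub x (R.support_dropUntil_subset hvR ?_)
      rw [← hQdef, hQ, Walk.support_cons]
      exact List.mem_cons_of_mem _ hx
    obtain ⟨PA, hPApath, hPAsub⟩ := ToughAux.exists_path_in hconn hpA hqA
    set Z : G.Walk v u := P.reverse.append (Walk.cons hzw Q') with hZ
    have hZsupp : Z.support = P.support.reverse ++ Q'.support := by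
      rw [hZ, Walk.support_append, Walk.support_cons, List.tail_cons, Walk.support_reverse]
    have hZsub : ∀ x ∈ Z.support, x ∈ C.support := by
      intro x hx
      rw [hZsupp] at hx
      rcases List.mem_append.1 hx with h1 | h1
      · exact hPsub x (List.mem_reverse.1 h1)
      · exact hQ'sub x h1
    have hZnodup : Z.support.Nodup := by
      rw [hZsupp]
      refine List.Nodup.append (List.nodup_reverse.2 hPpath.support_nodup)
        hQ'path.support_nodup ?_
      intro x hx1 hx2
      exact hdisjPQ (List.mem_reverse.1 hx1) hx2
    set X : G.Walk p u := PA.append (Walk.cons hvq.symm Z) with hX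
    have hXsupp : X.support = PA.support ++ Z.support := by
      rw [hX, Walk.support_append, Walk.support_cons, List.tail_cons]
    have hXpath : X.IsPath := by
      rw [Walk.isPath_def, hXsupp]
      refine List.Nodup.append hPApath.support_nodup hZnodup ?_
      intro x hx1 hx2
      exact hdisj x (hPAsub x hx1) (hZsub x hx2)
    have hedge : s(u, p) ∉ X.edges := by
      rw [hX, Walk.edges_append, Walk.edges_cons, hZ, Walk.edges_append, Walk.edges_cons]
      intro hmem
      rcases List.mem_append.1 hmem with h1 | h2
      · exact hdisj u (hPAsub u (PA.fst_mem_support_of_mem_edges h1)) huC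
      · rcases List.mem_cons.1 h2 with heq | h3
        · rw [Sym2.eq_iff] at heq
          rcases heq with ⟨h4, h5⟩ | ⟨h4, h5⟩
          · exact hdisj q hqA (h4 ▸ huC)
          · exact huv h4
        · rcases List.mem_append.1 h3 with h4 | h5
          · refine hdisj p hpA (hPsub p ?_)
            have h5 := P.reverse.snd_mem_support_of_mem_edges h4
            rwa [Walk.support_reverse, List.mem_reverse] at h5
          · rcases List.mem_cons.1 h5 with heq | h6
            · rw [Sym2.eq_iff] at heq
              rcases heq with ⟨h7, h8⟩ | ⟨h7, h8⟩
              · exact hadj.ne h7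
              · exact hw_notW (h7 ▸ (show u ∈ W from ⟨huC, p, hpA, hup⟩))
            · exact hdisj p hpA (hQ'sub p (Q'.snd_mem_support_of_mem_edges h6))
    refine ⟨u, Walk.cons hup X, (Walk.cons_isCycle_iff X hup).2 ⟨hXpath, hedge⟩, ?_, p, hpA, ?_⟩
    · intro x hx
      rw [Walk.support_cons]
      rcases hCsub x hx with rfl | hxR
      · exact List.mem_cons_self
      · refine List.mem_cons_of_mem _ ?_
        rw [hXsupp]
        refine List.mem_append_right _ ?_
        rw [hZsupp]
        rw [hRsupp] at hxR
        rcases List.mem_append.1 hxR with h1 | h1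
        · exact List.mem_append_left _ (List.mem_reverse.2 h1)
        · exact List.mem_append_right _ h1
    · rw [Walk.support_cons]
      exact List.mem_cons_of_mem _ X.start_mem_support
  -- Case C: toughness contradiction
  exfalso
  push_neg at hB
  obtain ⟨⟨a, haA⟩⟩ := hconn.nonempty
  have hWC : ∀ x ∈ W, x ∈ C.support := fun x hx => hx.1
  have ht1 : (0:ℝ) < t + 1 := by linarith
  by_cases hWne : W.Nonempty
  · set S : Set V := (ToughAux.csucc C) '' W with hS
    have hSC : ∀ y ∈ S, y ∈ C.support := by
      rintro y ⟨x, hxW, rfl⟩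
      exact ToughAux.csucc_mem_support hC (hWC _ hxW)
    have hSnW : ∀ y ∈ S, y ∉ W := by
      rintro y ⟨x, hxW, rfl⟩
      exact hA x hxW
    have haS : a ∉ S := fun h => hdisj a haA (hSC a h)
    set I : Set V := insert a S with hI
    have hind : ∀ x ∈ I, ∀ y ∈ I, ¬ G.Adj x y := by
      intro x hx y hy hadj
      rcases Set.mem_insert_iff.1 hx with heqx | hxS
      · rcases Set.mem_insert_iff.1 hy with heqy | hyS
        · exact hadj.ne (heqx.trans heqy.symm)
        · exact hSnW _ hyS ⟨hSC _ hyS, a, haA, (heqx ▸ hadj).symm⟩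
      · rcases Set.mem_insert_iff.1 hy with heqy | hyS
        · exact hSnW _ hxS ⟨hSC _ hxS, a, haA, heqy ▸ hadj⟩
        · obtain ⟨x', hx'W, rfl⟩ := hxS
          obtain ⟨y', hy'W, rfl⟩ := hyS
          by_cases hxy : x' = y'
          · subst hxy; exact hadj.ne rfl
          · exact hB x' hx'W y' hy'W hxy hadj
    have hScard : S.ncard = W.ncard := Set.ncard_image_of_injOn
      (fun x hx y hy h => ToughAux.csucc_injOn hC (hWC _ hx) (hWC _ hy) h)
    have hIcard : I.ncard = W.ncard + 1 := by
      rw [hI, Set.ncard_insert_of_notMem haS S.toFinite, hScard]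
    have hW1 : 1 ≤ W.ncard := (Set.ncard_pos W.toFinite).2 hWne
    have hcomps : ncomps G Iᶜ = I.ncard := ToughAux.ncomps_of_indep hind
    have h2 : 2 ≤ ncomps G Iᶜ := by rw [hcomps, hIcard]; omega
    have htI := htough Iᶜ h2
    rw [hcomps, hIcard] at htI
    have hcompl : I.ncard + Iᶜ.ncard = Fintype.card V := by
      rw [← Nat.card_eq_fintype_card]; exact Set.ncard_add_ncard_compl I
    rw [hIcard] at hcompl
    have h4 : ((Iᶜ.ncard : ℝ)) = (Fintype.card V : ℝ) - ((W.ncard : ℝ) + 1) := by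
      have := congrArg (fun n : ℕ => (n : ℝ)) hcompl
      push_cast at this
      linarith
    have h3 : (Fintype.card V : ℝ) < ((W.ncard : ℝ) + 1) * (t + 1) := by
      have hd : (Fintype.card V : ℝ) / (t+1) < (W.ncard : ℝ) + 1 :=
        sub_lt_iff_lt_add.1 hnbr
      exact (div_lt_iff₀ ht1).1 hd
    push_cast at htI
    nlinarith
  · rw [Set.not_nonempty_iff_eq_empty] at hWne
    have hW0 : (W.ncard : ℝ) = 0 := by rw [hWne]; simp
    rw [hW0] at hnbr
    have hnlt : (Fintype.card V : ℝ) < t + 1 := by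
      have h5 : (Fintype.card V : ℝ) / (t + 1) < 1 := sub_neg.1 hnbr
      have := (div_lt_one ht1).1 h5
      linarith
    have hav0 : a ≠ v0 := fun h => hdisj a haA (h ▸ C.start_mem_support)
    have hnadj : ¬ G.Adj v0 a := by
      intro h
      have hv0W : v0 ∈ W := ⟨C.start_mem_support, a, haA, h⟩
      rw [hWne] at hv0W
      exact hv0W
    set s2 : Set V := {a, v0} with hs2
    have hind : ∀ x ∈ s2, ∀ y ∈ s2, ¬ G.Adj x y := by
      intro x hx y hy hadj
      rcases hx with rfl | rfl <;> rcases hy with rfl | rfl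
      · exact hadj.ne rfl
      · exact hnadj hadj.symm
      · exact hnadj hadj
      · exact hadj.ne rfl
    have hcomps : ncomps G s2ᶜ = 2 := by
      rw [ToughAux.ncomps_of_indep hind, hs2, Set.ncard_pair hav0]
    have htI := htough s2ᶜ (by rw [hcomps])
    rw [hcomps] at htI
    have hcompl : s2.ncard + s2ᶜ.ncard = Fintype.card V := by
      rw [← Nat.card_eq_fintype_card]; exact Set.ncard_add_ncard_compl s2
    rw [hs2, Set.ncard_pair hav0] at hcompl
    have h4 : ((s2ᶜ.ncard : ℝ)) = (Fintype.card V : ℝ) - 2 := by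
      have := congrArg (fun n : ℕ => (n : ℝ)) hcompl
      push_cast at this
      linarith
    push_cast at htI
    linarith
end

section
/- Let $G$ be a $(P_4 \cup P_1)$-free graph on $n$ vertices and let $S = \{v \in V(G) : d_G(v) \ge n/4\}$. Then the graph $G - S$ is $P_4$-free. -/
open SimpleGraph

lemma P4P1_adj_iff (i j : Fin 5) : P4P1.Adj i j ↔
    ((i = 0 ∧ j = 1) ∨ (i = 1 ∧ j = 0) ∨ (i = 1 ∧ j = 2) ∨ (i = 2 ∧ j = 1) ∨
     (i = 2 ∧ j = 3) ∨ (i = 3 ∧ j = 2)) := by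
  simp [P4P1, Sym2.eq_iff]; aesop

theorem stmt17 {V : Type*} [Fintype V] (G : SimpleGraph V) [DecidableRel G.Adj]
    (hfree : P4P1Free G) :
    P4Free (G.induce {v : V | (Fintype.card V : ℝ) / 4 ≤ (G.degree v : ℝ)}ᶜ) := by
  classical
  refine ⟨fun f => ?_⟩
  set n := Fintype.card V with hn
  have hdeg : ∀ i : Fin 4, (G.degree (f i : V) : ℝ) < (n : ℝ) / 4 := by
    intro i
    have h2 := (f i).2
    simp only [Set.mem_compl_iff, Set.mem_setOf_eq, not_le] at h2
    exact h2
  have hadj : ∀ i j : Fin 4, G.Adj ((f i : V)) ((f j : V)) ↔ (pathGraph 4).Adj i j := by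
    intro i j
    rw [← f.map_adj_iff]
    simp [comap_adj]
  have hne : ∀ i j : Fin 4, i ≠ j → (f i : V) ≠ (f j : V) := by
    intro i j h hh
    exact h (f.injective (Subtype.ext hh))
  set a := (f 0 : V); set b := (f 1 : V); set c := (f 2 : V); set d := (f 3 : V)
  have hab : G.Adj a b := (hadj 0 1).mpr (by rw [pathGraph_adj]; omega)
  have hbc : G.Adj b c := (hadj 1 2).mpr (by rw [pathGraph_adj]; omega)
  have hcd : G.Adj c d := (hadj 2 3).mpr (by rw [pathGraph_adj]; omega)
  have hac : ¬G.Adj a c := fun h => by rw [hadj, pathGraph_adj] at h; omega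
  have had : ¬G.Adj a d := fun h => by rw [hadj, pathGraph_adj] at h; omega
  have hbd : ¬G.Adj b d := fun h => by rw [hadj, pathGraph_adj] at h; omega
  have nab : a ≠ b := hne 0 1 (by decide)
  have nac : a ≠ c := hne 0 2 (by decide)
  have nad : a ≠ d := hne 0 3 (by decide)
  have nbc : b ≠ c := hne 1 2 (by decide)
  have nbd : b ≠ d := hne 1 3 (by decide)
  have ncd : c ≠ d := hne 2 3 (by decide)
  have hcov : ∀ v : V, v ∈ G.neighborFinset a ∪ G.neighborFinset b ∪ G.neighborFinset c ∪
      G.neighborFinset d := by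
    intro v
    by_contra hcc
    simp only [Finset.mem_union, mem_neighborFinset, not_or] at hcc
    obtain ⟨⟨⟨hva, hvb⟩, hvc⟩, hvd⟩ := hcc
    have hvna : v ≠ a := fun h => hvb (by rw [h]; exact hab.symm)
    have hvnb : v ≠ b := fun h => hva (by rw [h]; exact hab)
    have hvnc : v ≠ c := fun h => hvb (by rw [h]; exact hbc)
    have hvnd : v ≠ d := fun h => hvc (by rw [h]; exact hcd)
    have hba : G.Adj b a := hab.symm
    have hcb : G.Adj c b := hbc.symm
    have hdc : G.Adj d c := hcd.symm
    have hca : ¬G.Adj c a := fun h => hac h.symm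
    have hda : ¬G.Adj d a := fun h => had h.symm
    have hdb : ¬G.Adj d b := fun h => hbd h.symm
    have hvra : ¬G.Adj v a := fun h => hva h.symm
    have hvrb : ¬G.Adj v b := fun h => hvb h.symm
    have hvrc : ¬G.Adj v c := fun h => hvc h.symm
    have hvrd : ¬G.Adj v d := fun h => hvd h.symm
    refine hfree.elim ⟨⟨![a, b, c, d, v], ?_⟩, ?_⟩
    · intro i j hij
      fin_cases i <;> fin_cases j <;> simp_all [Matrix.cons_val_zero, Matrix.cons_val_one,
        Matrix.head_cons]
    · intro i j
      change G.Adj (![a, b, c, d, v] i) (![a, b, c, d, v] j) ↔ _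
      simp only [Function.Embedding.coeFn_mk, P4P1_adj_iff]
      fin_cases i <;> fin_cases j <;>
        simp [hab, hbc, hcd, hba, hcb, hdc, hac, had, hbd, hca, hda, hdb,
          hva, hvb, hvc, hvd, hvra, hvrb, hvrc, hvrd, G.loopless]
  have hcard : n ≤ G.degree a + G.degree b + G.degree c + G.degree d := by
    calc n = (Finset.univ : Finset V).card := (Finset.card_univ).symm
    _ ≤ _ := Finset.card_le_card (fun v _ => hcov v)
    _ ≤ _ := by
        simp only [degree]
        refine le_trans (Finset.card_union_le _ _) ?_
        gcongr
        refine le_trans (Finset.card_union_le _ _) ?_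
        gcongr
        exact Finset.card_union_le _ _
  have h0 := hdeg 0; have h1 := hdeg 1; have h2 := hdeg 2; have h3 := hdeg 3
  have hr : (n : ℝ) ≤ (G.degree a : ℝ) + G.degree b + G.degree c + G.degree d := by
    exact_mod_cast hcard
  linarith
end

section
/- Let $G$ be a $(P_4 \cup P_1)$-free graph and $S$ a cutset of $G$ such that $G-S$ has at least three components. Let $D_1$ be a component of $G-S$ and let $x \in S$ be a vertex having a neighbor in $D_1$ and also a neighbor in some component of $G-S$ other than $D_1$. If $x$ is not adjacent to every vertex of $D_1$, then $x$ is adjacent to every vertex of every component of $G-S$ other than $D_1$. -/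
open SimpleGraph

section Aux
variable {V : Type*}

lemma aux_third {α : Type*} [Finite α] (h : 3 ≤ Nat.card α) (a b : α) :
    ∃ c, c ≠ a ∧ c ≠ b := by
  by_contra hc
  push_neg at hc
  have hsub : (Set.univ : Set α) ⊆ {a, b} := by
    intro c _
    by_cases h1 : c = a
    · exact Or.inl h1
    · exact Or.inr (hc c h1)
  have := Set.ncard_le_ncard hsub (Set.toFinite _)
  rw [Set.ncard_univ] at this
  have h2 : ({a, b} : Set α).ncard ≤ 2 := by
    apply (Set.ncard_insert_le _ _).trans
    simp
  omega

lemma aux_switch {V' : Type*} (H : SimpleGraph V') (P : V' → Prop) :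
    ∀ {u v : V'} (_ : H.Walk u v), P u → ¬ P v →
      ∃ a b, H.Adj a b ∧ P a ∧ ¬ P b ∧ H.Reachable u a := by
  intro u v p
  induction p with
  | nil => intro hu hv; exact absurd hu hv
  | @cons u' v' w' h p ih =>
    intro hu hv
    by_cases hm : P v'
    · obtain ⟨a, b, hab, ha, hb, hr⟩ := ih hm hv
      exact ⟨a, b, hab, ha, hb, h.reachable.trans hr⟩
    · exact ⟨u', v', h, hu, hm, Reachable.refl _⟩

lemma aux_cross (G : SimpleGraph V) (S : Set V) (u v : ↥Sᶜ)
    (h : (G.induce Sᶜ).connectedComponentMk u ≠ (G.induce Sᶜ).connectedComponentMk v) :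
    ¬ G.Adj (u : V) v := by
  intro hadj
  exact h (ConnectedComponent.sound
    ((by simpa using hadj : (G.induce Sᶜ).Adj u v)).reachable)

end Aux

lemma no5 {V : Type*} (G : SimpleGraph V) (hfree : P4P1Free G) (v0 v1 v2 v3 v4 : V)
    (h01 : G.Adj v0 v1) (h12 : G.Adj v1 v2) (h23 : G.Adj v2 v3)
    (h02 : ¬G.Adj v0 v2) (h03 : ¬G.Adj v0 v3) (h13 : ¬G.Adj v1 v3)
    (h04 : ¬G.Adj v0 v4) (h14 : ¬G.Adj v1 v4) (h24 : ¬G.Adj v2 v4)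
    (h34 : ¬G.Adj v3 v4) : False := by
  have n01 : v0 ≠ v1 := h01.ne
  have n12 : v1 ≠ v2 := h12.ne
  have n23 : v2 ≠ v3 := h23.ne
  have n02 : v0 ≠ v2 := fun h => h03 (h ▸ h23)
  have n03 : v0 ≠ v3 := fun h => h13 (h ▸ h01.symm)
  have n13 : v1 ≠ v3 := fun h => h03 (h ▸ h01)
  have n04 : v0 ≠ v4 := fun h => h14 (h ▸ h01.symm)
  have n14 : v1 ≠ v4 := fun h => h04 (h ▸ h01)
  have n24 : v2 ≠ v4 := fun h => h34 (h ▸ h23.symm)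
  have n34 : v3 ≠ v4 := fun h => h24 (h ▸ h23)
  have m10 : v1 ≠ v0 := n01.symm
  have m20 : v2 ≠ v0 := n02.symm
  have m30 : v3 ≠ v0 := n03.symm
  have m40 : v4 ≠ v0 := n04.symm
  have m21 : v2 ≠ v1 := n12.symm
  have m31 : v3 ≠ v1 := n13.symm
  have m41 : v4 ≠ v1 := n14.symm
  have m32 : v3 ≠ v2 := n23.symm
  have m42 : v4 ≠ v2 := n24.symm
  have m43 : v4 ≠ v3 := n34.symm
  apply hfree.false
  have h20 : ¬G.Adj v2 v0 := fun h => h02 h.symm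
  have h30 : ¬G.Adj v3 v0 := fun h => h03 h.symm
  have h31 : ¬G.Adj v3 v1 := fun h => h13 h.symm
  have h40 : ¬G.Adj v4 v0 := fun h => h04 h.symm
  have h41 : ¬G.Adj v4 v1 := fun h => h14 h.symm
  have h42 : ¬G.Adj v4 v2 := fun h => h24 h.symm
  have h43 : ¬G.Adj v4 v3 := fun h => h34 h.symm
  have h10 : G.Adj v1 v0 := h01.symm
  have h21 : G.Adj v2 v1 := h12.symm
  have h32 : G.Adj v3 v2 := h23.symm
  refine ⟨⟨![v0, v1, v2, v3, v4], ?_⟩, ?_⟩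
  · intro a b hab
    fin_cases a <;> fin_cases b <;> simp_all
  · intro a b
    have h20 : ¬G.Adj v2 v0 := fun h => h02 h.symm
    have h30 : ¬G.Adj v3 v0 := fun h => h03 h.symm
    have h31 : ¬G.Adj v3 v1 := fun h => h13 h.symm
    have h40 : ¬G.Adj v4 v0 := fun h => h04 h.symm
    have h41 : ¬G.Adj v4 v1 := fun h => h14 h.symm
    have h42 : ¬G.Adj v4 v2 := fun h => h24 h.symm
    have h43 : ¬G.Adj v4 v3 := fun h => h34 h.symm
    have h10 : G.Adj v1 v0 := h01.symm
    have h21 : G.Adj v2 v1 := h12.symm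
    have h32 : G.Adj v3 v2 := h23.symm
    change G.Adj (![v0, v1, v2, v3, v4] a) (![v0, v1, v2, v3, v4] b) ↔ _
    fin_cases a <;> fin_cases b <;>
      simp_all [P4P1]

theorem stmt18 {V : Type*} [Fintype V] (G : SimpleGraph V) (hfree : P4P1Free G)
    (S : Set V) (hS : IsCutset G S)
    (hthree : 3 ≤ Nat.card (G.induce Sᶜ).ConnectedComponent)
    (c1 : (G.induce Sᶜ).ConnectedComponent) (x : V) (hx : x ∈ S)
    (h1 : ∃ u : ↥Sᶜ, (G.induce Sᶜ).connectedComponentMk u = c1 ∧ G.Adj x (u : V))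
    (h2 : ∃ u : ↥Sᶜ, (G.induce Sᶜ).connectedComponentMk u ≠ c1 ∧ G.Adj x (u : V))
    (h3 : ∃ u : ↥Sᶜ, (G.induce Sᶜ).connectedComponentMk u = c1 ∧ ¬ G.Adj x (u : V)) :
    ∀ w : ↥Sᶜ, (G.induce Sᶜ).connectedComponentMk w ≠ c1 → G.Adj x (w : V) := by
  classical
  obtain ⟨u1, hu1c, hu1a⟩ := h1
  obtain ⟨u2, hu2c, hu2a⟩ := h2
  obtain ⟨u3, hu3c, hu3n⟩ := h3
  intro w hwc
  by_contra hxw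
  have hreach : (G.induce Sᶜ).Reachable u1 u3 := ConnectedComponent.exact (hu1c.trans hu3c.symm)
  obtain ⟨p⟩ := hreach
  obtain ⟨a, b, hab, ha, hb, hra⟩ :=
    aux_switch (G.induce Sᶜ) (fun z => G.Adj x (z : V)) p hu1a hu3n
  have hac : (G.induce Sᶜ).connectedComponentMk a = c1 := (ConnectedComponent.sound hra).symm.trans hu1c
  have hbc : (G.induce Sᶜ).connectedComponentMk b = c1 :=
    (ConnectedComponent.sound hab.reachable).symm.trans hac
  have hGab : G.Adj (a : V) (b : V) := by
    simpa using hab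
  have hbu2 : ¬ G.Adj (b : V) (u2 : V) :=
    aux_cross G S b u2 (by rw [hbc]; exact fun h => hu2c h.symm)
  have hau2 : ¬ G.Adj (a : V) (u2 : V) :=
    aux_cross G S a u2 (by rw [hac]; exact fun h => hu2c h.symm)
  have hbw : ¬ G.Adj (b : V) (w : V) :=
    aux_cross G S b w (by rw [hbc]; exact fun h => hwc h.symm)
  have haw : ¬ G.Adj (a : V) (w : V) :=
    aux_cross G S a w (by rw [hac]; exact fun h => hwc h.symm)
  have hbx : ¬ G.Adj (b : V) x := fun h => hb h.symm
  by_cases hcc : (G.induce Sᶜ).connectedComponentMk w = (G.induce Sᶜ).connectedComponentMk u2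
  · obtain ⟨c3, hc3a, hc3b⟩ := aux_third hthree c1 ((G.induce Sᶜ).connectedComponentMk w)
    obtain ⟨z, hz⟩ := c3.exists_rep
    have hzc : (G.induce Sᶜ).connectedComponentMk z = c3 := hz
    have hbz : ¬ G.Adj (b : V) (z : V) :=
      aux_cross G S b z (by rw [hbc, hzc]; exact fun h => hc3a h.symm)
    have haz : ¬ G.Adj (a : V) (z : V) :=
      aux_cross G S a z (by rw [hac, hzc]; exact fun h => hc3a h.symm)
    have hzw : ¬ G.Adj (z : V) (w : V) :=
      aux_cross G S z w (by rw [hzc]; exact fun h => hc3b h)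
    by_cases hxz : G.Adj x (z : V)
    · exact no5 G hfree (b : V) (a : V) x (z : V) (w : V)
        hGab.symm ha.symm hxz hbx hbz haz hbw haw hxw hzw
    · have hu2z : ¬ G.Adj (u2 : V) (z : V) :=
        aux_cross G S u2 z (by rw [hzc, ← hcc]; exact fun h => hc3b h.symm)
      exact no5 G hfree (b : V) (a : V) x (u2 : V) (z : V)
        hGab.symm ha.symm hu2a hbx hbu2 hau2 hbz haz hxz hu2z
  · have hu2w : ¬ G.Adj (u2 : V) (w : V) :=
      aux_cross G S u2 w (fun h => hcc h.symm)
    exact no5 G hfree (b : V) (a : V) x (u2 : V) (w : V)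
      hGab.symm ha.symm hu2a hbx hbu2 hau2 hbw haw hxw hu2w
end
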